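/- arXiv:1111.3847 — 5 statements merged into one kernel-verified Lean document; each statement's English description precedes it below -/
import Mathlib

section
/- Let q₀, …, q_k be real quadratic forms on ℝ^{n+1}, let p be a positive definite quadratic form on ℝ^{n+1}, and fix j ∈ ℕ. Then Ω^{j+1} = ⋃_{ε>0} Ω_{n−j}(ε), i.e. a point ω ∈ S^k satisfies i⁺(ωq) ≥ j+1 if and only if there exists ε̄ > 0 such that i⁻(ωq − εp) ≤ n − j for all 0 < ε < ε̄. -/
open CategoryTheory

/-- The quotient topology on a real projective space `ℙ(V)`. -/
instance (V : Type*) [AddCommGroup V] [Module ℝ V] [TopologicalSpace V] :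
    TopologicalSpace (Projectivization ℝ V) :=
  inferInstanceAs (TopologicalSpace (Quotient (projectivizationSetoid ℝ V)))

/-- The `i`-th singular homology of a topological space `X` with coefficients in the
commutative ring `R`. -/
noncomputable def singularHomology (R : Type) [CommRing R]
    (X : Type) [TopologicalSpace X] (i : ℕ) : ModuleCat R :=
  ((AlgebraicTopology.alternatingFaceMapComplex (ModuleCat R)).obj
      (((SimplicialObject.whiskering _ _).obj (ModuleCat.free R)).obj
        (TopCat.toSSet.obj (TopCat.of X)))).homology i

/-- The total Betti number of `X` with `ℤ/2` coefficients. -/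
noncomputable def totalBetti (X : Type) [TopologicalSpace X] : Cardinal :=
  Cardinal.sum fun i : ℕ => Module.rank (ZMod 2) (singularHomology (ZMod 2) X i)

/-- The unit sphere `S^k ⊂ ℝ^{k+1}`. -/
def unitSphere (k : ℕ) : Set (Fin (k + 1) → ℝ) := {ω | ∑ i, ω i ^ 2 = 1}

/-- The positive inertia index of a real quadratic form: the maximal dimension of a
subspace on which it is positive definite. -/
noncomputable def posInertia {n : ℕ} (q : QuadraticForm ℝ (Fin n → ℝ)) : ℕ :=
  sSup {d : ℕ | ∃ W : Submodule ℝ (Fin n → ℝ),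
    Module.finrank ℝ W = d ∧ ∀ x ∈ W, x ≠ 0 → 0 < q x}

/-- The negative inertia index of a real quadratic form. -/
noncomputable def negInertia {n : ℕ} (q : QuadraticForm ℝ (Fin n → ℝ)) : ℕ := posInertia (-q)

private lemma bddAbove_posSet {m : ℕ} (Q : QuadraticForm ℝ (Fin m → ℝ)) :
    BddAbove {d : ℕ | ∃ W : Submodule ℝ (Fin m → ℝ),
      Module.finrank ℝ W = d ∧ ∀ x ∈ W, x ≠ 0 → 0 < Q x} := by
  refine ⟨m, ?_⟩
  rintro d ⟨W, rfl, -⟩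
  simpa [Module.finrank_fin_fun] using Submodule.finrank_le W

private lemma posSet_nonempty {m : ℕ} (Q : QuadraticForm ℝ (Fin m → ℝ)) :
    {d : ℕ | ∃ W : Submodule ℝ (Fin m → ℝ),
      Module.finrank ℝ W = d ∧ ∀ x ∈ W, x ≠ 0 → 0 < Q x}.Nonempty :=
  ⟨0, ⊥, finrank_bot ℝ _, fun x hx h0 => absurd (by simpa using hx) h0⟩

private lemma le_posInertia {m : ℕ} {Q : QuadraticForm ℝ (Fin m → ℝ)}
    {W : Submodule ℝ (Fin m → ℝ)} (hW : ∀ x ∈ W, x ≠ 0 → 0 < Q x) :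
    Module.finrank ℝ W ≤ posInertia Q :=
  le_csSup (bddAbove_posSet Q) ⟨W, rfl, hW⟩

private lemma exists_posSubspace {m : ℕ} (Q : QuadraticForm ℝ (Fin m → ℝ)) :
    ∃ W : Submodule ℝ (Fin m → ℝ),
      Module.finrank ℝ W = posInertia Q ∧ ∀ x ∈ W, x ≠ 0 → 0 < Q x :=
  Nat.sSup_mem (posSet_nonempty Q) (bddAbove_posSet Q)

private lemma posInertia_add_negInertia_le {m : ℕ} (Q : QuadraticForm ℝ (Fin m → ℝ)) :
    posInertia Q + negInertia Q ≤ m := by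
  obtain ⟨W₁, h₁, hW₁⟩ := exists_posSubspace Q
  obtain ⟨W₂, h₂, hW₂⟩ := exists_posSubspace (-Q)
  have hdisj : W₁ ⊓ W₂ = ⊥ := by
    rw [Submodule.eq_bot_iff]
    rintro x ⟨hx1, hx2⟩
    by_contra h0
    have := hW₁ x hx1 h0
    have := hW₂ x hx2 h0
    simp only [QuadraticMap.neg_apply] at this
    linarith
  have key := Submodule.finrank_sup_add_finrank_inf_eq W₁ W₂
  rw [hdisj] at key
  simp only [finrank_bot, add_zero] at key
  have hle : Module.finrank ℝ ↥(W₁ ⊔ W₂) ≤ m := by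
    simpa [Module.finrank_fin_fun] using Submodule.finrank_le (W₁ ⊔ W₂)
  unfold negInertia
  omega



private lemma qf_continuous {E : Type*} [NormedAddCommGroup E] [NormedSpace ℝ E]
    [FiniteDimensional ℝ E] (Q : QuadraticForm ℝ E) : Continuous fun x => Q x := by
  have h : ∀ x, Q x = QuadraticMap.associated (R := ℝ) Q x x := fun x =>
    (QuadraticMap.associated_eq_self_apply ℝ Q x).symm
  simp_rw [h]
  set B := QuadraticMap.associated (R := ℝ) Q with hB
  have hc : Continuous fun x => ((LinearMap.toContinuousLinearMap : (E →ₗ[ℝ] ℝ) ≃ₗ[ℝ] (E →L[ℝ] ℝ)).toLinearMap.comp B x) x := by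
    exact isBoundedBilinearMap_apply.continuous.comp
      (((LinearMap.toContinuousLinearMap : (E →ₗ[ℝ] ℝ) ≃ₗ[ℝ] (E →L[ℝ] ℝ)).toLinearMap.comp
        B).continuous_of_finiteDimensional.prodMk continuous_id)
  simpa using hc

private lemma exists_eps {m : ℕ} (Q p : QuadraticForm ℝ (Fin m → ℝ))
    (hp : ∀ x, x ≠ 0 → 0 < p x) (W : Submodule ℝ (Fin m → ℝ))
    (hWrank : 0 < Module.finrank ℝ W) (hW : ∀ x ∈ W, x ≠ 0 → 0 < Q x) :
    ∃ ε₀ > (0:ℝ), ∀ ε : ℝ, 0 < ε → ε < ε₀ → ∀ x ∈ W, x ≠ 0 → 0 < Q x - ε * p x := by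
  have hnt : Nontrivial W := Module.nontrivial_of_finrank_pos (R := ℝ) hWrank
  have hS : (Metric.sphere (0 : W) 1).Nonempty := NormedSpace.sphere_nonempty.mpr zero_le_one
  have hcpt : IsCompact (Metric.sphere (0 : W) 1) := isCompact_sphere 0 1
  have hfc : Continuous fun x : W => Q (x : Fin m → ℝ) :=
    (qf_continuous Q).comp continuous_subtype_val
  have hgc : Continuous fun x : W => p (x : Fin m → ℝ) :=
    (qf_continuous p).comp continuous_subtype_val
  obtain ⟨a, haS, ha⟩ := hcpt.exists_isMinOn hS hfc.continuousOn
  obtain ⟨b, hbS, hb⟩ := hcpt.exists_isMaxOn hS hgc.continuousOn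
  have hnz : ∀ y : W, y ∈ Metric.sphere (0 : W) 1 → (y : Fin m → ℝ) ≠ 0 := by
    intro y hy h0
    have : y ≠ 0 := by
      intro h; rw [h] at hy; simp at hy
    exact this (by exact_mod_cast Subtype.ext h0)
  have hc : 0 < Q (a : Fin m → ℝ) := hW _ a.2 (hnz a haS)
  have hC : 0 < p (b : Fin m → ℝ) := hp _ (hnz b hbS)
  set c := Q (a : Fin m → ℝ) with hcdef
  set C := p (b : Fin m → ℝ) with hCdef
  refine ⟨c / C, div_pos hc hC, ?_⟩
  intro ε hε hεlt x hxW hx0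
  set t : ℝ := ‖(⟨x, hxW⟩ : W)‖ with ht
  have htpos : 0 < t := by
    rw [ht, norm_pos_iff]
    exact fun h => hx0 (by simpa using Subtype.ext_iff.mp h)
  set u : W := t⁻¹ • ⟨x, hxW⟩ with hu
  have huS : u ∈ Metric.sphere (0 : W) 1 := by
    simp only [Metric.mem_sphere, dist_zero_right, hu]
    exact norm_smul_inv_norm (fun h => htpos.ne' (by rw [ht, h, norm_zero]))
  have hQu : Q (u : Fin m → ℝ) = t⁻¹ * t⁻¹ * Q x := by
    have : (u : Fin m → ℝ) = t⁻¹ • x := rfl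
    rw [this, QuadraticMap.map_smul]
    simp [smul_eq_mul]
  have hpu : p (u : Fin m → ℝ) = t⁻¹ * t⁻¹ * p x := by
    have : (u : Fin m → ℝ) = t⁻¹ • x := rfl
    rw [this, QuadraticMap.map_smul]
    simp [smul_eq_mul]
  have h1 : c ≤ t⁻¹ * t⁻¹ * Q x := by rw [← hQu]; exact ha huS
  have h2 : t⁻¹ * t⁻¹ * p x ≤ C := by rw [← hpu]; exact hb huS
  have hεC : ε * C < c := (lt_div_iff₀ hC).mp hεlt
  have ht2 : 0 < t⁻¹ * t⁻¹ := by positivity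
  nlinarith [hp x hx0]

private lemma finrank_ker_funLeft {m : ℕ} (s : Finset (Fin m)) :
    m - s.card ≤ Module.finrank ℝ
      (LinearMap.ker (LinearMap.funLeft ℝ ℝ (Subtype.val : {i // i ∈ s} → Fin m))) := by
  set f := LinearMap.funLeft ℝ ℝ (Subtype.val : {i // i ∈ s} → Fin m) with hf
  have h := LinearMap.finrank_range_add_finrank_ker f
  have h2 : Module.finrank ℝ (LinearMap.range f) ≤ s.card := by
    have := Submodule.finrank_le (LinearMap.range f)
    simpa [Module.finrank_fintype_fun_eq_card, Fintype.card_coe] using this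
  have h3 : Module.finrank ℝ (Fin m → ℝ) = m := Module.finrank_fin_fun ℝ
  omega

private lemma mem_ker_funLeft {m : ℕ} (s : Finset (Fin m)) (x : Fin m → ℝ) :
    x ∈ LinearMap.ker (LinearMap.funLeft ℝ ℝ (Subtype.val : {i // i ∈ s} → Fin m)) ↔
      ∀ i ∈ s, x i = 0 := by
  simp only [LinearMap.mem_ker, LinearMap.funLeft_apply, funext_iff]
  constructor
  · intro h i hi; exact h ⟨i, hi⟩
  · intro h i; exact h i.1 i.2

private lemma neg_subspace_of_posInertia_le {n j : ℕ} {Q : QuadraticForm ℝ (Fin (n+1) → ℝ)}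
    (h : posInertia Q ≤ j) :
    ∃ V : Submodule ℝ (Fin (n+1) → ℝ),
      (n : ℤ) + 1 - (j : ℤ) ≤ (Module.finrank ℝ V : ℤ) ∧ ∀ x ∈ V, Q x ≤ 0 := by
  classical
  obtain ⟨w, ⟨g⟩⟩ := Q.equivalent_weightedSumSquares
  have hm : Module.finrank ℝ (Fin (n+1) → ℝ) = n + 1 := Module.finrank_fin_fun ℝ
  set P : Finset (Fin (Module.finrank ℝ (Fin (n+1) → ℝ))) :=
    Finset.univ.filter (fun i => 0 < w i) with hP
  set N : Finset (Fin (Module.finrank ℝ (Fin (n+1) → ℝ))) :=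
    Finset.univ.filter (fun i => ¬ 0 < w i) with hN
  have hcard : P.card + N.card = n + 1 := by
    rw [hP, hN]
    rw [Finset.card_filter_add_card_filter_not (s := Finset.univ)
      (p := fun i => 0 < w i)]
    simp [hm]
  have happ : ∀ x, Q x = ∑ i, w i * (g x i * g x i) := by
    intro x
    have hx := g.map_app x
    rw [QuadraticMap.weightedSumSquares_apply] at hx
    rw [← hx]
    simp [smul_eq_mul]
  -- positive subspace
  set Wp : Submodule ℝ (Fin (n+1) → ℝ) :=
    (LinearMap.ker (LinearMap.funLeft ℝ ℝ (Subtype.val : {i // i ∈ N} → _))).comap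
      g.toLinearEquiv.toLinearMap with hWp
  have hWp_rank : Module.finrank ℝ Wp =
      Module.finrank ℝ (LinearMap.ker (LinearMap.funLeft ℝ ℝ (Subtype.val : {i // i ∈ N} → _))) := by
    rw [hWp, Submodule.comap_equiv_eq_map_symm]
    exact LinearEquiv.finrank_map_eq _ _
  have hWp_pos : ∀ x ∈ Wp, x ≠ 0 → 0 < Q x := by
    intro x hx hx0
    rw [happ]
    have hxk : ∀ i ∈ N, g x i = 0 := (mem_ker_funLeft N (g x)).mp hx
    have hgx0 : g.toLinearEquiv x ≠ 0 := by
      simpa using (g.toLinearEquiv.map_ne_zero_iff).mpr hx0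
    obtain ⟨i, hi⟩ : ∃ i, g x i ≠ 0 := by
      by_contra hc
      push_neg at hc
      exact hgx0 (funext hc)
    refine Finset.sum_pos' (fun i _ => ?_) ⟨i, Finset.mem_univ i, ?_⟩
    · by_cases hwi : 0 < w i
      · have := mul_self_nonneg (g x i)
        nlinarith
      · rw [hxk i (by simp only [hN, Finset.mem_filter, Finset.mem_univ, true_and]; exact hwi)]
        simp
    · have hwi : 0 < w i := by
        by_contra hwi
        exact hi (hxk i (by simp only [hN, Finset.mem_filter, Finset.mem_univ, true_and]; exact hwi))
      exact mul_pos hwi (mul_self_pos.mpr hi)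
  have hPj : P.card ≤ j := by
    have h1 := finrank_ker_funLeft N
    have h2 := le_posInertia hWp_pos
    rw [hWp_rank] at h2
    omega
  -- nonpositive subspace
  set V : Submodule ℝ (Fin (n+1) → ℝ) :=
    (LinearMap.ker (LinearMap.funLeft ℝ ℝ (Subtype.val : {i // i ∈ P} → _))).comap
      g.toLinearEquiv.toLinearMap with hV
  have hV_rank : Module.finrank ℝ V =
      Module.finrank ℝ (LinearMap.ker (LinearMap.funLeft ℝ ℝ (Subtype.val : {i // i ∈ P} → _))) := by
    rw [hV, Submodule.comap_equiv_eq_map_symm]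
    exact LinearEquiv.finrank_map_eq _ _
  refine ⟨V, ?_, ?_⟩
  · have h1 := finrank_ker_funLeft P
    rw [← hV_rank] at h1
    omega
  · intro x hx
    rw [happ]
    have hxk : ∀ i ∈ P, g x i = 0 := (mem_ker_funLeft P (g x)).mp hx
    refine Finset.sum_nonpos fun i _ => ?_
    by_cases hwi : 0 < w i
    · rw [hxk i (by simp [hP, hwi])]
      simp
    · push_neg at hwi
      have : 0 ≤ g x i * g x i := mul_self_nonneg _
      nlinarith

/-- `Ω^{j+1} = ⋃_{ε>0} Ω_{n−j}(ε)`: a point `ω ∈ S^k` satisfies `i⁺(ωq) ≥ j+1` if and only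
if there is `ε̄ > 0` such that `i⁻(ωq − εp) ≤ n − j` (read in `ℤ`) for all `0 < ε < ε̄`. -/
theorem omega_union_characterization (n k j : ℕ)
    (q : Fin (k + 1) → QuadraticForm ℝ (Fin (n + 1) → ℝ))
    (p : QuadraticForm ℝ (Fin (n + 1) → ℝ)) (hp : ∀ x, x ≠ 0 → 0 < p x) :
    ∀ ω ∈ unitSphere k,
      (j + 1 ≤ posInertia (∑ i, ω i • q i) ↔
        ∃ ε₀ > (0 : ℝ), ∀ ε : ℝ, 0 < ε → ε < ε₀ →
          (negInertia (∑ i, ω i • q i - ε • p) : ℤ) ≤ (n : ℤ) - (j : ℤ)) := by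
  intro ω hω
  set Q := ∑ i, ω i • q i with hQ
  constructor
  · intro hj
    obtain ⟨W, hWrank, hWpos⟩ := exists_posSubspace Q
    have hrk : j + 1 ≤ Module.finrank ℝ W := by omega
    obtain ⟨ε₀, hε₀, hkey⟩ := exists_eps Q p hp W (by omega) hWpos
    refine ⟨ε₀, hε₀, fun ε hε hεlt => ?_⟩
    have hpos : ∀ x ∈ W, x ≠ 0 → 0 < (Q - ε • p) x := by
      intro x hx hx0
      have := hkey ε hε hεlt x hx hx0
      simpa [QuadraticMap.sub_apply, QuadraticMap.smul_apply, smul_eq_mul] using this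
    have h1 : j + 1 ≤ posInertia (Q - ε • p) := le_trans hrk (le_posInertia hpos)
    have h2 := posInertia_add_negInertia_le (Q - ε • p)
    omega
  · rintro ⟨ε₀, hε₀, hall⟩
    by_contra hc
    push_neg at hc
    have hle : posInertia Q ≤ j := by omega
    obtain ⟨V, hVrank, hVneg⟩ := neg_subspace_of_posInertia_le hle
    have hε := hall (ε₀ / 2) (by linarith) (by linarith)
    have hneg : ∀ x ∈ V, x ≠ 0 → 0 < (-(Q - (ε₀ / 2) • p)) x := by
      intro x hx hx0
      have h1 := hVneg x hx
      have h2 := hp x hx0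
      simp only [QuadraticMap.neg_apply, QuadraticMap.sub_apply,
        QuadraticMap.smul_apply, smul_eq_mul]
      nlinarith
    have h3 : Module.finrank ℝ V ≤ negInertia (Q - (ε₀ / 2) • p) := le_posInertia hneg
    omega
end

section
/- Let q be a real quadratic form on ℝ^{n+1} and p a positive definite quadratic form on ℝ^{n+1}. Then for all sufficiently small ε > 0, i⁻(q − εp) = i⁻(q) + dim ker(q), where ker(q) is the kernel of the symmetric bilinear form associated to q. -/
open Module Submodule Finset

namespace InertiaAux
variable {N : ℕ}


lemma inertiaSet_bdd (q : QuadraticForm ℝ (Fin N → ℝ)) :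
    BddAbove {d : ℕ | ∃ W : Submodule ℝ (Fin N → ℝ),
      Module.finrank ℝ W = d ∧ ∀ x ∈ W, x ≠ 0 → 0 < q x} := by
  refine ⟨finrank ℝ (Fin N → ℝ), ?_⟩
  rintro d ⟨W, hW, -⟩
  exact hW ▸ W.finrank_le

lemma inertiaSet_nonempty (q : QuadraticForm ℝ (Fin N → ℝ)) :
    (0 : ℕ) ∈ {d : ℕ | ∃ W : Submodule ℝ (Fin N → ℝ),
      Module.finrank ℝ W = d ∧ ∀ x ∈ W, x ≠ 0 → 0 < q x} :=
  ⟨⊥, finrank_bot ℝ _, fun x hx hx0 => absurd ((mem_bot ℝ).1 hx) hx0⟩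

lemma le_posInertia (q : QuadraticForm ℝ (Fin N → ℝ)) {W : Submodule ℝ (Fin N → ℝ)}
    (hW : ∀ x ∈ W, x ≠ 0 → 0 < q x) : finrank ℝ W ≤ posInertia q :=
  le_csSup (inertiaSet_bdd q) ⟨W, rfl, hW⟩

lemma posInertia_attained (q : QuadraticForm ℝ (Fin N → ℝ)) :
    ∃ W : Submodule ℝ (Fin N → ℝ),
      finrank ℝ W = posInertia q ∧ ∀ x ∈ W, x ≠ 0 → 0 < q x :=
  Nat.sSup_mem ⟨0, inertiaSet_nonempty q⟩ (inertiaSet_bdd q)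

lemma dim_add_dim_le (U V : Submodule ℝ (Fin N → ℝ))
    (hUV : ∀ x, x ∈ U → x ∈ V → x = 0) :
    finrank ℝ U + finrank ℝ V ≤ N := by
  have hbot : U ⊓ V = ⊥ := by
    rw [eq_bot_iff]
    rintro x hx
    exact (mem_bot ℝ).2 (hUV x hx.1 hx.2)
  have := Submodule.finrank_sup_add_finrank_inf_eq U V
  rw [hbot, finrank_bot, add_zero] at this
  rw [← this]
  have h2 := (U ⊔ V).finrank_le
  simpa using h2

lemma finrank_sup_of_trivial_inf (U V : Submodule ℝ (Fin N → ℝ))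
    (hUV : ∀ x, x ∈ U → x ∈ V → x = 0) :
    finrank ℝ ↥(U ⊔ V) = finrank ℝ U + finrank ℝ V := by
  have hbot : U ⊓ V = ⊥ := by
    rw [eq_bot_iff]
    rintro x hx
    exact (mem_bot ℝ).2 (hUV x hx.1 hx.2)
  have := Submodule.finrank_sup_add_finrank_inf_eq U V
  rw [hbot, finrank_bot, add_zero] at this
  exact this

lemma qf_zero_of_mem_ker (q : QuadraticForm ℝ (Fin N → ℝ)) {b : Fin N → ℝ}
    (hb : b ∈ LinearMap.ker (QuadraticMap.associated (R := ℝ) q)) : q b = 0 := by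
  rw [← QuadraticMap.associated_eq_self_apply ℝ q b, LinearMap.mem_ker.1 hb,
    LinearMap.zero_apply]

lemma qf_add_mem_ker (q : QuadraticForm ℝ (Fin N → ℝ)) {b : Fin N → ℝ}
    (hb : b ∈ LinearMap.ker (QuadraticMap.associated (R := ℝ) q)) (a : Fin N → ℝ) :
    q (a + b) = q a := by
  have hb' : QuadraticMap.associated (R := ℝ) q b = 0 := LinearMap.mem_ker.1 hb
  have hab : QuadraticMap.associated (R := ℝ) q a b = 0 := by
    have hsymm := QuadraticMap.associated_isSymm ℝ q
    have h := hsymm a b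
    have h' : QuadraticMap.associated (R := ℝ) q a b
        = QuadraticMap.associated (R := ℝ) q b a := h
    rw [h', hb', LinearMap.zero_apply]
  calc q (a + b) = QuadraticMap.associated (R := ℝ) q (a + b) (a + b) :=
        (QuadraticMap.associated_eq_self_apply ℝ q (a + b)).symm
    _ = QuadraticMap.associated (R := ℝ) q a a := by
        simp [map_add, LinearMap.add_apply, hb', hab]
    _ = q a := QuadraticMap.associated_eq_self_apply ℝ q a



def coordSub (N : ℕ) (s : Finset (Fin N)) : Submodule ℝ (Fin N → ℝ) where
  carrier := {x | ∀ i ∉ s, x i = 0}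
  add_mem' := fun hx hy i hi => by simp [hx i hi, hy i hi]
  zero_mem' := fun i _ => rfl
  smul_mem' := fun c x hx i hi => by simp [hx i hi]

lemma mem_coordSub {s : Finset (Fin N)} {x : Fin N → ℝ} :
    x ∈ coordSub N s ↔ ∀ i ∉ s, x i = 0 := Iff.rfl

noncomputable def coordSubEquiv (s : Finset (Fin N)) : coordSub N s ≃ₗ[ℝ] (s → ℝ) where
  toFun x := fun i => x.1 i
  map_add' := fun x y => rfl
  map_smul' := fun c x => rfl
  invFun y := ⟨fun i => if h : i ∈ s then y ⟨i, h⟩ else 0, fun i hi => dif_neg hi⟩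
  left_inv := fun x => Subtype.ext (funext fun i => by
    by_cases h : i ∈ s
    · simp [h]
    · simp [h, x.2 i h])
  right_inv := fun y => funext fun i => by simp

lemma finrank_coordSub (s : Finset (Fin N)) : finrank ℝ (coordSub N s) = s.card := by
  rw [(coordSubEquiv s).finrank_eq]; simp

lemma assoc_wss (w : Fin N → ℝ) (u v : Fin N → ℝ) :
    QuadraticMap.associated (R := ℝ) (QuadraticMap.weightedSumSquares ℝ w) u v
      = ∑ i, w i * (u i * v i) := by
  rw [QuadraticMap.associated_apply]
  simp only [QuadraticMap.weightedSumSquares_apply, smul_eq_mul, Pi.add_apply]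
  rw [← Finset.sum_sub_distrib, ← Finset.sum_sub_distrib]
  rw [Module.End.smul_def, QuadraticMap.half_moduleEnd_apply_eq_half_smul, invOf_eq_inv, smul_eq_mul,
    Finset.mul_sum]
  exact Finset.sum_congr rfl fun i _ => by ring

lemma sylvester (E : Type) [AddCommGroup E] [Module ℝ E] [FiniteDimensional ℝ E]
    (q : QuadraticForm ℝ E) :
    ∃ Vp Vn : Submodule ℝ E,
      (∀ x ∈ Vp, x ≠ 0 → 0 < q x) ∧ (∀ x ∈ Vn, x ≠ 0 → q x < 0) ∧
      finrank ℝ Vp + finrank ℝ Vn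
        + finrank ℝ (LinearMap.ker (QuadraticMap.associated (R := ℝ) q)) = finrank ℝ E := by
  classical
  obtain ⟨w, hw, ⟨iso⟩⟩ := q.equivalent_one_zero_neg_one_weighted_sum_squared
  let e : E ≃ₗ[ℝ] (Fin (finrank ℝ E) → ℝ) := iso.toLinearEquiv
  have hq : ∀ x, q x = QuadraticMap.weightedSumSquares ℝ w (e x) :=
    fun x => (iso.map_app x).symm
  set sp := Finset.univ.filter (fun i => w i = 1) with hsp
  set sn := Finset.univ.filter (fun i => w i = -1) with hsn
  set s0 := Finset.univ.filter (fun i => w i = 0) with hs0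
  refine ⟨(coordSub (finrank ℝ E) sp).comap e.toLinearMap, (coordSub (finrank ℝ E) sn).comap e.toLinearMap, ?_, ?_, ?_⟩
  · intro x hx hx0
    rw [hq x, QuadraticMap.weightedSumSquares_apply]
    have hy0 : e x ≠ 0 := fun h => hx0 (by rwa [LinearEquiv.map_eq_zero_iff] at h)
    obtain ⟨j, hj⟩ := Function.ne_iff.1 hy0
    have hx' : ∀ i ∉ sp, e x i = 0 := hx
    refine Finset.sum_pos' (fun i _ => ?_) ⟨j, Finset.mem_univ j, ?_⟩
    · by_cases hi : i ∈ sp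
      · have h1 : w i = 1 := (Finset.mem_filter.1 hi).2
        rw [h1, smul_eq_mul, one_mul]
        exact mul_self_nonneg _
      · rw [hx' i hi]; simp
    · have hjp : j ∈ sp := by
        by_contra hjn
        exact hj (by simpa using hx' j hjn)
      have h1 : w j = 1 := (Finset.mem_filter.1 hjp).2
      rw [h1, smul_eq_mul, one_mul]
      exact mul_self_pos.2 (by simpa using hj)
  · intro x hx hx0
    rw [hq x, QuadraticMap.weightedSumSquares_apply]
    have hy0 : e x ≠ 0 := fun h => hx0 (by rwa [LinearEquiv.map_eq_zero_iff] at h)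
    obtain ⟨j, hj⟩ := Function.ne_iff.1 hy0
    have hx' : ∀ i ∉ sn, e x i = 0 := hx
    have : 0 < ∑ i, -(w i • (e x i * e x i)) := by
      refine Finset.sum_pos' (fun i _ => ?_) ⟨j, Finset.mem_univ j, ?_⟩
      · by_cases hi : i ∈ sn
        · have h1 : w i = -1 := (Finset.mem_filter.1 hi).2
          rw [h1, smul_eq_mul]
          simpa using mul_self_nonneg (e x i)
        · rw [hx' i hi]; simp
      · have hjp : j ∈ sn := by
          by_contra hjn
          exact hj (by simpa using hx' j hjn)
        have h1 : w j = -1 := (Finset.mem_filter.1 hjp).2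
        rw [h1, smul_eq_mul]
        simpa using hj
    rw [Finset.sum_neg_distrib] at this
    linarith
  · have hker : LinearMap.ker (QuadraticMap.associated (R := ℝ) q)
        = (coordSub (finrank ℝ E) s0).comap e.toLinearMap := by
      have hassoc : ∀ x y, QuadraticMap.associated (R := ℝ) q x y
          = ∑ i, w i * (e x i * e y i) := by
        intro x y
        have hqc : q = (QuadraticMap.weightedSumSquares ℝ w).comp e.toLinearMap := by
          ext z; simp [hq z, QuadraticMap.comp_apply]
        rw [hqc, QuadraticMap.associated_comp]
        simp only [LinearMap.compl₁₂_apply, LinearEquiv.coe_coe]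
        exact assoc_wss w (e x) (e y)
      ext x
      simp only [LinearMap.mem_ker, mem_comap, LinearEquiv.coe_coe, mem_coordSub]
      constructor
      · intro h i hi
        have hwi : w i ≠ 0 := fun h0 => hi (Finset.mem_filter.2 ⟨Finset.mem_univ i, h0⟩)
        have h2 : QuadraticMap.associated (R := ℝ) q x (e.symm (Pi.single i 1)) = 0 := by
          rw [h, LinearMap.zero_apply]
        rw [hassoc] at h2
        simp only [LinearEquiv.apply_symm_apply] at h2
        rw [Finset.sum_eq_single i] at h2
        · simpa [hwi] using h2
        · intro j _ hji
          simp [Pi.single_apply, hji]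
        · intro h'; exact absurd (Finset.mem_univ i) h'
      · intro h
        apply LinearMap.ext
        intro y
        rw [hassoc, LinearMap.zero_apply]
        refine Finset.sum_eq_zero fun i _ => ?_
        by_cases hi : i ∈ s0
        · have : w i = 0 := (Finset.mem_filter.1 hi).2
          rw [this, zero_mul]
        · rw [h i hi]; ring
    rw [hker]
    have hfr : ∀ s : Finset (Fin (finrank ℝ E)),
        finrank ℝ ((coordSub (finrank ℝ E) s).comap e.toLinearMap) = s.card := by
      intro s
      rw [Submodule.comap_equiv_eq_map_symm]
      rw [LinearEquiv.finrank_map_eq]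
      exact finrank_coordSub s
    rw [hfr, hfr, hfr]
    -- counting
    have hunion : sp ∪ (sn ∪ s0) = Finset.univ := by
      ext i
      simp only [Finset.mem_union, hsp, hsn, hs0, Finset.mem_filter, Finset.mem_univ,
        true_and, iff_true]
      rcases hw i with h | h | h
      · right; left; exact h
      · right; right; exact h
      · left; exact h
    have d1 : Disjoint sn s0 := by
      rw [Finset.disjoint_left]
      intro i h h'
      have h1 : w i = -1 := (Finset.mem_filter.1 h).2
      have h2 : w i = 0 := (Finset.mem_filter.1 h').2
      rw [h1] at h2; norm_num at h2
    have d2 : Disjoint sp (sn ∪ s0) := by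
      rw [Finset.disjoint_left]
      intro i h h'
      have h1 : w i = 1 := (Finset.mem_filter.1 h).2
      rcases Finset.mem_union.1 h' with h' | h'
      · have h2 : w i = -1 := (Finset.mem_filter.1 h').2
        rw [h1] at h2; norm_num at h2
      · have h2 : w i = 0 := (Finset.mem_filter.1 h').2
        rw [h1] at h2; norm_num at h2
    have := Finset.card_union_of_disjoint d2
    rw [hunion, Finset.card_union_of_disjoint d1, Finset.card_univ, Fintype.card_fin] at this
    omega



lemma continuous_qf (q : QuadraticForm ℝ (Fin N → ℝ)) : Continuous fun x => q x := by
  classical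
  set A := QuadraticMap.associated (R := ℝ) q with hA
  let f : (Fin N → ℝ) →ₗ[ℝ] ((Fin N → ℝ) →L[ℝ] ℝ) :=
    (LinearMap.toContinuousLinearMap :
      ((Fin N → ℝ) →ₗ[ℝ] ℝ) ≃ₗ[ℝ] ((Fin N → ℝ) →L[ℝ] ℝ)).toLinearMap.comp A
  have hf : Continuous f := f.continuous_of_finiteDimensional
  have h2 : Continuous fun x => (f x) x :=
    isBoundedBilinearMap_apply.continuous.comp (hf.prodMk continuous_id)
  have h3 : (fun x => q x) = fun x => (f x) x := by
    funext x
    simp only [f, LinearMap.comp_apply, LinearEquiv.coe_coe,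
      LinearMap.coe_toContinuousLinearMap]
    exact (QuadraticMap.associated_eq_self_apply ℝ q x).symm
  rw [h3]; exact h2

lemma exists_eps (q p : QuadraticForm ℝ (Fin N → ℝ)) (V : Submodule ℝ (Fin N → ℝ))
    (hq : ∀ x ∈ V, x ≠ 0 → 0 < q x) (hp : ∀ x, x ≠ 0 → 0 < p x) :
    ∃ ε₀ > (0 : ℝ), ∀ x ∈ V, ε₀ * p x ≤ q x := by
  by_cases hV : ∀ x ∈ V, x = (0 : Fin N → ℝ)
  · exact ⟨1, one_pos, fun x hx => by rw [hV x hx]; simp⟩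
  push_neg at hV
  obtain ⟨v, hvV, hv0⟩ := hV
  set S : Set (Fin N → ℝ) := (V : Set (Fin N → ℝ)) ∩ Metric.sphere 0 1 with hSdef
  have hVc : IsClosed (V : Set (Fin N → ℝ)) := V.closed_of_finiteDimensional
  have hcomp : IsCompact S := (isCompact_sphere 0 1).inter_left hVc
  have hvn : ‖v‖ ≠ 0 := norm_ne_zero_iff.2 hv0
  have hne : S.Nonempty := by
    refine ⟨‖v‖⁻¹ • v, V.smul_mem _ hvV, ?_⟩
    simp [norm_smul, abs_of_nonneg (inv_nonneg.2 (norm_nonneg v)), inv_mul_cancel₀ hvn]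
  obtain ⟨a, haS, ha⟩ := hcomp.exists_isMinOn hne (continuous_qf q).continuousOn
  obtain ⟨b, hbS, hb⟩ := hcomp.exists_isMaxOn hne (continuous_qf p).continuousOn
  have ha' : ∀ y ∈ S, q a ≤ q y := ha
  have hb' : ∀ y ∈ S, p y ≤ p b := hb
  have haV : a ∈ V := haS.1
  have ha0 : a ≠ 0 := by
    intro h
    have := haS.2
    rw [h] at this
    simp at this
  have hb0 : b ≠ 0 := by
    intro h
    have := hbS.2
    rw [h] at this
    simp at this
  have hqa : 0 < q a := hq a haV ha0
  have hpb : 0 < p b := hp b hb0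
  refine ⟨q a / p b, div_pos hqa hpb, ?_⟩
  intro x hxV
  by_cases hx0 : x = 0
  · simp [hx0]
  have hnx : (0 : ℝ) < ‖x‖ := norm_pos_iff.2 hx0
  set u : Fin N → ℝ := ‖x‖⁻¹ • x with hu
  have huS : u ∈ S := by
    refine ⟨V.smul_mem _ hxV, ?_⟩
    simp [hu, norm_smul, abs_of_nonneg (inv_nonneg.2 (norm_nonneg x)),
      inv_mul_cancel₀ hnx.ne']
  have hx : x = ‖x‖ • u := by rw [hu, smul_smul, mul_inv_cancel₀ hnx.ne', one_smul]
  have hqx : q x = (‖x‖ * ‖x‖) * q u := by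
    conv_lhs => rw [hx, QuadraticMap.map_smul, smul_eq_mul]
  have hpx : p x = (‖x‖ * ‖x‖) * p u := by
    conv_lhs => rw [hx, QuadraticMap.map_smul, smul_eq_mul]
  have h1 : (q a / p b) * p u ≤ q a := by
    have := hb' u huS
    calc (q a / p b) * p u ≤ (q a / p b) * p b :=
          mul_le_mul_of_nonneg_left this (le_of_lt (div_pos hqa hpb))
      _ = q a := div_mul_cancel₀ _ hpb.ne'
  have h2 : q a ≤ q u := ha' u huS
  rw [hqx, hpx]
  have hsq : (0:ℝ) ≤ ‖x‖ * ‖x‖ := mul_self_nonneg _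
  calc (q a / p b) * ((‖x‖ * ‖x‖) * p u) = (‖x‖ * ‖x‖) * ((q a / p b) * p u) := by ring
    _ ≤ (‖x‖ * ‖x‖) * q u := mul_le_mul_of_nonneg_left (h1.trans h2) hsq


end InertiaAux

/-- For `q` a real quadratic form and `p` positive definite, for all sufficiently small
`ε > 0` one has `i⁻(q − εp) = i⁻(q) + dim ker(q)`, where `ker(q)` is the kernel of the
symmetric bilinear form associated to `q`. -/
theorem negInertia_sub_smul_posDef (n : ℕ)
    (q p : QuadraticForm ℝ (Fin (n + 1) → ℝ)) (hp : ∀ x, x ≠ 0 → 0 < p x) :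
    ∃ ε₀ > (0 : ℝ), ∀ ε : ℝ, 0 < ε → ε < ε₀ →
      negInertia (q - ε • p)
        = negInertia q
          + Module.finrank ℝ (LinearMap.ker (QuadraticMap.associated (R := ℝ) q)) := by
  classical
  obtain ⟨Vp, Vn, hVp, hVn, hsum⟩ := InertiaAux.sylvester (Fin (n + 1) → ℝ) q
  set K := LinearMap.ker (QuadraticMap.associated (R := ℝ) q) with hKdef
  have hEdim : finrank ℝ (Fin (n + 1) → ℝ) = n + 1 := Module.finrank_fin_fun ℝ
  rw [hEdim] at hsum
  have hVnK : ∀ x, x ∈ Vn → x ∈ K → x = 0 := by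
    intro x h1 h2
    by_contra h0
    have hq1 := hVn x h1 h0
    have hq2 : q x = 0 := InertiaAux.qf_zero_of_mem_ker q h2
    linarith
  have hVpK : ∀ x, x ∈ Vp → x ∈ K → x = 0 := by
    intro x h1 h2
    by_contra h0
    have hq1 := hVp x h1 h0
    have hq2 : q x = 0 := InertiaAux.qf_zero_of_mem_ker q h2
    linarith
  have hnn : ∀ x ∈ Vp ⊔ K, 0 ≤ q x := by
    intro x hx
    obtain ⟨a, ha, b, hb, rfl⟩ := Submodule.mem_sup.1 hx
    rw [InertiaAux.qf_add_mem_ker q hb a]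
    by_cases h0 : a = 0
    · simp [h0]
    · exact (hVp a ha h0).le
  have hdefn : negInertia q = posInertia (-q) := rfl
  have hnegI : negInertia q = finrank ℝ Vn := by
    apply le_antisymm
    · obtain ⟨U, hUr, hU⟩ := InertiaAux.posInertia_attained (-q)
      have hdisj : ∀ x, x ∈ U → x ∈ Vp ⊔ K → x = 0 := by
        intro x h1 h2
        by_contra h0
        have ha := hU x h1 h0
        rw [QuadraticMap.neg_apply] at ha
        have hb := hnn x h2
        linarith
      have hle := InertiaAux.dim_add_dim_le U (Vp ⊔ K) hdisj
      rw [InertiaAux.finrank_sup_of_trivial_inf Vp K hVpK] at hle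
      rw [hdefn, ← hUr]
      omega
    · rw [hdefn]
      refine InertiaAux.le_posInertia (-q) ?_
      intro x hx h0
      have := hVn x hx h0
      rw [QuadraticMap.neg_apply]
      linarith
  obtain ⟨ε₀, hε₀, heps⟩ := InertiaAux.exists_eps q p Vp hVp hp
  refine ⟨ε₀, hε₀, ?_⟩
  intro ε hε hεlt
  have happly : ∀ x, (q - ε • p) x = q x - ε * p x := by
    intro x
    rw [QuadraticMap.sub_apply, QuadraticMap.smul_apply, smul_eq_mul]
  have hdefn' : negInertia (q - ε • p) = posInertia (-(q - ε • p)) := rfl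
  apply le_antisymm
  · obtain ⟨U, hUr, hU⟩ := InertiaAux.posInertia_attained (-(q - ε • p))
    have hpos : ∀ x ∈ Vp, x ≠ 0 → 0 < (q - ε • p) x := by
      intro x hx h0
      have h1 := heps x hx
      have h2 := hp x h0
      rw [happly]
      nlinarith
    have hdisj : ∀ x, x ∈ U → x ∈ Vp → x = 0 := by
      intro x h1 h2
      by_contra h0
      have ha := hU x h1 h0
      rw [QuadraticMap.neg_apply] at ha
      have hb := hpos x h2 h0
      linarith
    have hle := InertiaAux.dim_add_dim_le U Vp hdisj
    rw [hnegI, hdefn', ← hUr]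
    omega
  · have hWr := InertiaAux.finrank_sup_of_trivial_inf Vn K hVnK
    have hneg : ∀ x ∈ Vn ⊔ K, x ≠ 0 → 0 < (-(q - ε • p)) x := by
      intro x hx h0
      obtain ⟨a, ha, b, hb, rfl⟩ := Submodule.mem_sup.1 hx
      have hqx : q (a + b) = q a := InertiaAux.qf_add_mem_ker q hb a
      have hqa : q a ≤ 0 := by
        by_cases h0a : a = 0
        · simp [h0a]
        · exact (hVn a ha h0a).le
      have hpx : 0 < p (a + b) := hp _ h0
      rw [QuadraticMap.neg_apply, happly, hqx]
      nlinarith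
    have hle := InertiaAux.le_posInertia (-(q - ε • p)) hneg
    rw [hWr] at hle
    rw [hnegI, hdefn']
    exact hle
end

section
/- Let q be a real quadratic form on ℝ^{n+1} with positive inertia index i⁺(q) ≥ 1. Then the open subset {[x] ∈ ℝPⁿ : q(x) > 0} of ℝPⁿ is homotopy equivalent to the real projective space ℝP^{i⁺(q)−1}; if i⁺(q) = 0 this subset is empty. -/
open Projectivization Topology

namespace PST

variable {m : ℕ}

lemma isQuotientMap_mkQ (m : ℕ) :
    IsQuotientMap (fun v : {v : Fin m → ℝ // v ≠ 0} => Projectivization.mk ℝ v.1 v.2) :=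
  isQuotientMap_quotient_mk'

lemma continuous_mkQ (m : ℕ) :
    Continuous (fun v : {v : Fin m → ℝ // v ≠ 0} => Projectivization.mk ℝ v.1 v.2) :=
  (isQuotientMap_mkQ m).continuous

/-- mk of a unit scalar multiple. -/
lemma mk_unit_smul (c : ℝˣ) (v : Fin m → ℝ) (hv : v ≠ 0) (h' : (c : ℝ) • v ≠ 0) :
    Projectivization.mk ℝ ((c : ℝ) • v) h' = Projectivization.mk ℝ v hv :=
  (mk_eq_mk_iff ℝ _ _ h' hv).2 ⟨c, rfl⟩

lemma isOpen_mk_image {Ω : Set (Fin m → ℝ)} (hΩ : IsOpen Ω) (h0 : ∀ v ∈ Ω, v ≠ 0) :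
    IsOpen {P : Projectivization ℝ (Fin m → ℝ) | ∃ v, ∃ hv : v ∈ Ω, P = Projectivization.mk ℝ v (h0 v hv)} := by
  rw [← (isQuotientMap_mkQ m).isOpen_preimage]
  have : (fun v : {v : Fin m → ℝ // v ≠ 0} => Projectivization.mk ℝ v.1 v.2) ⁻¹'
      {P : Projectivization ℝ (Fin m → ℝ) | ∃ v, ∃ hv : v ∈ Ω, P = Projectivization.mk ℝ v (h0 v hv)}
      = Subtype.val ⁻¹' (⋃ c : ℝˣ, (fun v => (c : ℝ) • v) ⁻¹' Ω) := by
    ext ⟨v, hv⟩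
    simp only [Set.mem_preimage, Set.mem_setOf_eq, Set.mem_iUnion]
    constructor
    · rintro ⟨u, hu, h⟩
      obtain ⟨a, ha⟩ := (mk_eq_mk_iff ℝ _ _ hv (h0 u hu)).1 h
      refine ⟨a⁻¹, ?_⟩
      show ((a⁻¹ : ℝˣ) : ℝ) • v ∈ Ω
      rw [← ha, ← Units.smul_def, inv_smul_smul]
      exact hu
    · rintro ⟨c, hc⟩
      refine ⟨(c : ℝ) • v, hc, ?_⟩
      exact (mk_unit_smul c v hv (h0 _ hc)).symm
  rw [this]
  exact ((isOpen_iUnion fun c => (by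
    exact hΩ.preimage (continuous_const_smul (c : ℝ)) : IsOpen _)).preimage continuous_subtype_val)

end PST
section S2
open Projectivization Topology
namespace PST
variable {m : ℕ} {C : Set (Fin m → ℝ)}

lemma rep_mem_iff (hinv : ∀ (c : ℝˣ), ∀ v ∈ C, (c : ℝ) • v ∈ C) {v : Fin m → ℝ}
    (hv : v ≠ 0) : (Projectivization.mk ℝ v hv).rep ∈ C ↔ v ∈ C := by
  obtain ⟨a, ha⟩ := exists_smul_eq_mk_rep ℝ v hv
  constructor
  · intro h
    have h2 := hinv a⁻¹ _ h
    rw [← ha, ← Units.smul_def, inv_smul_smul] at h2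
    exact h2
  · intro h
    rw [← ha, Units.smul_def]
    exact hinv a v h

lemma isOpenQuotientMap_mkC (hC : IsOpen C) (h0 : ∀ v ∈ C, v ≠ 0)
    (hinv : ∀ (c : ℝˣ), ∀ v ∈ C, (c : ℝ) • v ∈ C) :
    IsOpenQuotientMap (fun v : {v : Fin m → ℝ // v ∈ C} =>
      (⟨Projectivization.mk ℝ v.1 (h0 v.1 v.2), (rep_mem_iff hinv (h0 v.1 v.2)).2 v.2⟩ :
        {P : Projectivization ℝ (Fin m → ℝ) // P.rep ∈ C})) := by
  refine ⟨?_, ?_, ?_⟩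
  · rintro ⟨P, hP⟩
    refine ⟨⟨P.rep, hP⟩, ?_⟩
    exact Subtype.ext (mk_rep P)
  · refine Continuous.subtype_mk ?_ _
    have : Continuous (fun v : {v : Fin m → ℝ // v ∈ C} =>
        (⟨v.1, h0 v.1 v.2⟩ : {v : Fin m → ℝ // v ≠ 0})) :=
      Continuous.subtype_mk continuous_subtype_val _
    exact (continuous_mkQ m).comp this
  · intro U hU
    rw [isOpen_induced_iff] at hU
    obtain ⟨Ω, hΩ, rfl⟩ := hU
    have h0' : ∀ v ∈ Ω ∩ C, v ≠ 0 := fun v hv => h0 v hv.2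
    have hW := isOpen_mk_image (hΩ.inter hC) h0'
    have himg : (fun v : {v : Fin m → ℝ // v ∈ C} =>
        (⟨Projectivization.mk ℝ v.1 (h0 v.1 v.2), (rep_mem_iff hinv (h0 v.1 v.2)).2 v.2⟩ :
          {P : Projectivization ℝ (Fin m → ℝ) // P.rep ∈ C})) '' (Subtype.val ⁻¹' Ω)
        = Subtype.val ⁻¹'
          {P : Projectivization ℝ (Fin m → ℝ) | ∃ v, ∃ hv : v ∈ Ω ∩ C,
            P = Projectivization.mk ℝ v (h0' v hv)} := by
      ext ⟨P, hP⟩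
      simp only [Set.mem_image, Set.mem_preimage, Set.mem_setOf_eq, Subtype.exists]
      constructor
      · rintro ⟨v, hvC, hvΩ, h⟩
        have : P = Projectivization.mk ℝ v (h0 v hvC) := by
          simpa using congrArg Subtype.val h.symm
        exact ⟨v, ⟨hvΩ, hvC⟩, this⟩
      · rintro ⟨v, ⟨hvΩ, hvC⟩, h⟩
        exact ⟨v, hvC, hvΩ, Subtype.ext h.symm⟩
    rw [himg]
    exact hW.preimage continuous_subtype_val

end PST
end S2
section S3
open Projectivization Topology
namespace PST
variable {m : ℕ}

lemma q_smul (q : QuadraticForm ℝ (Fin m → ℝ)) (c : ℝ) (v : Fin m → ℝ) :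
    q (c • v) = c ^ 2 * q v := by
  rw [QuadraticMap.map_smul, smul_eq_mul, sq]

lemma pos_ne_zero (q : QuadraticForm ℝ (Fin m → ℝ)) {v : Fin m → ℝ} (h : 0 < q v) :
    v ≠ 0 := by
  rintro rfl
  simp only [QuadraticMap.map_zero, lt_self_iff_false] at h

lemma rep_pos_iff (q : QuadraticForm ℝ (Fin m → ℝ)) {v : Fin m → ℝ} (hv : v ≠ 0) :
    0 < q (Projectivization.mk ℝ v hv).rep ↔ 0 < q v := by
  obtain ⟨a, ha⟩ := exists_smul_eq_mk_rep ℝ v hv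
  rw [← ha, Units.smul_def, q_smul]
  have ha2 : (0:ℝ) < (a:ℝ) ^ 2 := by
    have : (a:ℝ) ≠ 0 := Units.ne_zero a
    positivity
  constructor
  · intro h
    nlinarith
  · intro h
    exact mul_pos ha2 h

variable {w : Fin m → ℝ} {d : ℕ}

lemma sum_pos_of_supported (hw : ∀ i : Fin m, (i : ℕ) < d ↔ 0 < w i)
    {v : Fin m → ℝ} (hv : v ≠ 0) (hsupp : ∀ i : Fin m, ¬((i : ℕ) < d) → v i = 0) :
    0 < ∑ i, w i * (v i * v i) := by
  have hne : ∃ j, v j ≠ 0 := Function.ne_iff.1 hv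
  obtain ⟨j, hj⟩ := hne
  have hjd : (j : ℕ) < d := by
    by_contra h
    exact hj (hsupp j h)
  refine Finset.sum_pos' (fun i _ => ?_) ⟨j, Finset.mem_univ j, ?_⟩
  · by_cases h : (i : ℕ) < d
    · exact mul_nonneg (le_of_lt ((hw i).1 h)) (mul_self_nonneg _)
    · rw [hsupp i h]; simp
  · exact mul_pos ((hw j).1 hjd) (mul_self_pos.2 hj)

lemma sum_nonpos_of_cosupported (hw : ∀ i : Fin m, (i : ℕ) < d ↔ 0 < w i)
    {v : Fin m → ℝ} (hsupp : ∀ i : Fin m, (i : ℕ) < d → v i = 0) :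
    ∑ i, w i * (v i * v i) ≤ 0 := by
  refine Finset.sum_nonpos fun i _ => ?_
  by_cases h : (i : ℕ) < d
  · rw [hsupp i h]; simp
  · have hwi : w i ≤ 0 := le_of_not_gt (fun hh => h ((hw i).2 hh))
    exact mul_nonpos_of_nonpos_of_nonneg hwi (mul_self_nonneg _)

lemma sum_scale_ge (hw : ∀ i : Fin m, (i : ℕ) < d ↔ 0 < w i)
    (v : Fin m → ℝ) {t : ℝ} (ht0 : 0 ≤ t) (ht1 : t ≤ 1) :
    ∑ i, w i * (v i * v i) ≤
      ∑ i, w i * ((if (i : ℕ) < d then v i else (1 - t) * v i) *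
        (if (i : ℕ) < d then v i else (1 - t) * v i)) := by
  refine Finset.sum_le_sum fun i _ => ?_
  by_cases h : (i : ℕ) < d
  · simp [h]
  · have hwi : w i ≤ 0 := le_of_not_gt (fun hh => h ((hw i).2 hh))
    simp only [h, if_false]
    have h1 : 0 ≤ (-(w i)) * ((v i * v i) * (t * (2 - t))) :=
      mul_nonneg (neg_nonneg.2 hwi)
        (mul_nonneg (mul_self_nonneg _) (mul_nonneg ht0 (by linarith)))
    nlinarith [h1]

end PST
end S3
section S4
open Projectivization Topology
namespace PST

/-- Extension by zero from `ℝ^d` to `ℝ^m`. -/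
def extZero (d m : ℕ) : (Fin d → ℝ) →ₗ[ℝ] (Fin m → ℝ) where
  toFun u := fun i => if h : (i : ℕ) < d then u ⟨i, h⟩ else 0
  map_add' u v := by funext i; by_cases h : (i : ℕ) < d <;> simp [h]
  map_smul' c u := by funext i; by_cases h : (i : ℕ) < d <;> simp [h]

lemma extZero_apply (d m : ℕ) (u : Fin d → ℝ) (i : Fin m) :
    extZero d m u i = if h : (i : ℕ) < d then u ⟨i, h⟩ else 0 := rfl

lemma extZero_injective {d m : ℕ} (h : d ≤ m) : Function.Injective (extZero d m) := by
  intro u v huv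
  funext j
  have h2 := congrFun huv ⟨(j : ℕ), lt_of_lt_of_le j.2 h⟩
  simpa [extZero_apply, j.2, Fin.eta] using h2

/-- Restriction to the first `d` coordinates. -/
def restr (d m : ℕ) (h : d ≤ m) : (Fin m → ℝ) →ₗ[ℝ] (Fin d → ℝ) :=
  LinearMap.funLeft ℝ ℝ (Fin.castLE h)

lemma restr_apply {d m : ℕ} (h : d ≤ m) (v : Fin m → ℝ) (i : Fin d) :
    restr d m h v i = v ⟨(i : ℕ), lt_of_lt_of_le i.2 h⟩ := rfl

lemma restr_extZero {d m : ℕ} (h : d ≤ m) (u : Fin d → ℝ) :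
    restr d m h (extZero d m u) = u := by
  funext i
  rw [restr_apply, extZero_apply]
  simp [i.2]

lemma extZero_restr {d m : ℕ} (h : d ≤ m) (v : Fin m → ℝ) (i : Fin m) :
    extZero d m (restr d m h v) i = if (i : ℕ) < d then v i else 0 := by
  rw [extZero_apply]
  by_cases hi : (i : ℕ) < d
  · simp only [hi, dif_pos, if_pos]
    rw [restr_apply]
  · simp [hi]

lemma extZero_supported {d m : ℕ} (u : Fin d → ℝ) (i : Fin m) (hi : ¬ ((i : ℕ) < d)) :
    extZero d m u i = 0 := by simp [extZero_apply, hi]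

lemma mem_range_extZero {d m : ℕ} (h : d ≤ m) (v : Fin m → ℝ) :
    v ∈ LinearMap.range (extZero d m) ↔ ∀ i : Fin m, ¬((i : ℕ) < d) → v i = 0 := by
  constructor
  · rintro ⟨u, rfl⟩ i hi
    exact extZero_supported u i hi
  · intro hv
    refine ⟨restr d m h v, ?_⟩
    funext i
    rw [extZero_restr]
    by_cases hi : (i : ℕ) < d
    · simp [hi]
    · simp [hi, (hv i hi).symm]

lemma finrank_range_extZero {d m : ℕ} (h : d ≤ m) :
    Module.finrank ℝ (LinearMap.range (extZero d m)) = d := by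
  rw [LinearMap.finrank_range_of_inj (extZero_injective h)]
  simp

lemma mem_ker_restr {d m : ℕ} (h : d ≤ m) (v : Fin m → ℝ) :
    v ∈ LinearMap.ker (restr d m h) ↔ ∀ i : Fin m, (i : ℕ) < d → v i = 0 := by
  rw [LinearMap.mem_ker]
  constructor
  · intro hv i hi
    have := congrFun hv ⟨(i : ℕ), hi⟩
    rwa [restr_apply] at this
  · intro hv
    funext i
    rw [restr_apply]
    exact hv _ (by exact i.2)

lemma finrank_ker_restr {d m : ℕ} (h : d ≤ m) :
    Module.finrank ℝ (LinearMap.ker (restr d m h)) = m - d := by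
  have hsurj : Function.Surjective (restr d m h) :=
    LinearMap.funLeft_surjective_of_injective ℝ ℝ _ (Fin.castLE_injective h)
  have := LinearMap.finrank_range_add_finrank_ker (restr d m h)
  rw [LinearMap.range_eq_top.2 hsurj] at this
  simp only [finrank_top] at this
  have hm : Module.finrank ℝ (Fin m → ℝ) = m := by simp
  have hd : Module.finrank ℝ (Fin d → ℝ) = d := by simp
  omega
end PST
end S4
section S5
open Projectivization Topology
namespace PST

lemma exists_diagonalization (m : ℕ) (q : QuadraticForm ℝ (Fin m → ℝ)) :
    ∃ (E : (Fin m → ℝ) ≃ₗ[ℝ] (Fin m → ℝ)) (w : Fin m → ℝ) (d : ℕ), d ≤ m ∧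
      (∀ v, q (E v) = ∑ i, w i * (v i * v i)) ∧
      (∀ i : Fin m, (i : ℕ) < d ↔ 0 < w i) := by
  classical
  obtain ⟨w₀, ⟨iso⟩⟩ := QuadraticForm.equivalent_weightedSumSquares q
  have hfr : Module.finrank ℝ (Fin m → ℝ) = m := by simp
  let c : Fin (Module.finrank ℝ (Fin m → ℝ)) ≃ Fin m := finCongr hfr
  let ρ : (Fin m → ℝ) ≃ₗ[ℝ] (Fin (Module.finrank ℝ (Fin m → ℝ)) → ℝ) :=
    LinearEquiv.funCongrLeft ℝ ℝ c
  let E₁ : (Fin m → ℝ) ≃ₗ[ℝ] (Fin m → ℝ) := ρ.trans iso.symm.toLinearEquiv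
  let w₁ : Fin m → ℝ := w₀ ∘ c.symm
  have hρ : ∀ (v : Fin m → ℝ) j, ρ v j = v (c j) := fun v j => rfl
  have hE₁ : ∀ v, q (E₁ v) = ∑ i, w₁ i * (v i * v i) := by
    intro v
    have h1 : q (E₁ v) = QuadraticMap.weightedSumSquares ℝ w₀ (ρ v) :=
      (iso.symm.map_app (ρ v))
    rw [h1, QuadraticMap.weightedSumSquares_apply]
    have h2 : ∀ j, w₀ j • (ρ v j * ρ v j) = w₁ (c j) * (v (c j) * v (c j)) := by
      intro j
      simp only [smul_eq_mul]
      rfl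
    rw [Finset.sum_congr rfl (fun j _ => h2 j)]
    exact Equiv.sum_comp c (fun i => w₁ i * (v i * v i))
  -- sorting
  let p : Fin m → Prop := fun i => 0 < w₁ i
  let d : ℕ := Fintype.card {i // p i}
  have hdm : d ≤ m := by
    have := Fintype.card_subtype_le p
    simpa using this
  have hcompl : Fintype.card {i // ¬ p i} = m - d := by
    rw [Fintype.card_subtype_compl]
    simp
    rfl
  have hsum : d + (m - d) = m := by omega
  let a : Fin d ≃ {i // p i} := (Fintype.equivFin _).symm
  let b : Fin (m - d) ≃ {i // ¬ p i} := (finCongr hcompl.symm).trans (Fintype.equivFin _).symm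
  let σ : Fin m ≃ Fin m :=
    ((finCongr hsum.symm).trans finSumFinEquiv.symm).trans
      ((Equiv.sumCongr a b).trans (Equiv.sumCompl p))
  have hσ : ∀ i : Fin m, (i : ℕ) < d ↔ p (σ i) := by
    intro i
    by_cases hi : (i : ℕ) < d
    · have hinl : finSumFinEquiv.symm (finCongr hsum.symm i) = Sum.inl ⟨(i : ℕ), hi⟩ := by
        rw [Equiv.symm_apply_eq, finSumFinEquiv_apply_left]
        ext
        simp
      have : σ i = ↑(a ⟨(i : ℕ), hi⟩) := by
        show (Equiv.sumCongr a b).trans (Equiv.sumCompl p)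
          (finSumFinEquiv.symm (finCongr hsum.symm i)) = _
        rw [hinl]
        simp
      rw [this]
      exact ⟨fun _ => (a ⟨(i : ℕ), hi⟩).2, fun _ => hi⟩
    · have hge : d ≤ (i : ℕ) := le_of_not_gt hi
      have hi2 : (i : ℕ) - d < m - d := by omega
      have hinr : finSumFinEquiv.symm (finCongr hsum.symm i) = Sum.inr ⟨(i : ℕ) - d, hi2⟩ := by
        rw [Equiv.symm_apply_eq, finSumFinEquiv_apply_right]
        ext
        simp
        omega
      have : σ i = ↑(b ⟨(i : ℕ) - d, hi2⟩) := by
        show (Equiv.sumCongr a b).trans (Equiv.sumCompl p)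
          (finSumFinEquiv.symm (finCongr hsum.symm i)) = _
        rw [hinr]
        simp
      rw [this]
      exact ⟨fun h => absurd h hi, fun h => absurd h (b ⟨(i : ℕ) - d, hi2⟩).2⟩
  -- assemble
  let τ : (Fin m → ℝ) ≃ₗ[ℝ] (Fin m → ℝ) := LinearEquiv.funCongrLeft ℝ ℝ σ.symm
  refine ⟨τ.trans E₁, w₁ ∘ σ, d, hdm, ?_, ?_⟩
  · intro v
    have h1 : (τ.trans E₁) v = E₁ (τ v) := rfl
    rw [h1, hE₁]
    have h2 : ∀ i, w₁ i * (τ v i * τ v i) = w₁ i * (v (σ.symm i) * v (σ.symm i)) := by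
      intro i; rfl
    rw [Finset.sum_congr rfl (fun i _ => h2 i)]
    have := Equiv.sum_comp σ (fun i => w₁ i * (v (σ.symm i) * v (σ.symm i)))
    rw [← this]
    refine Finset.sum_congr rfl (fun k _ => ?_)
    simp
  · intro i
    exact hσ i

end PST
end S5
section S6
open Projectivization Topology
namespace PST

lemma bddAbove_posSet (m : ℕ) (q : QuadraticForm ℝ (Fin m → ℝ)) :
    BddAbove {d : ℕ | ∃ W : Submodule ℝ (Fin m → ℝ),
      Module.finrank ℝ W = d ∧ ∀ x ∈ W, x ≠ 0 → 0 < q x} := by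
  refine ⟨m, fun k hk => ?_⟩
  obtain ⟨W, hW, -⟩ := hk
  rw [← hW]
  calc Module.finrank ℝ W ≤ Module.finrank ℝ (Fin m → ℝ) := W.finrank_le
  _ = m := by simp

lemma one_le_posInertia_of_pos {m : ℕ} (q : QuadraticForm ℝ (Fin m → ℝ)) {v : Fin m → ℝ}
    (hv : 0 < q v) : 1 ≤ posInertia q := by
  have hv0 : v ≠ 0 := pos_ne_zero q hv
  refine le_csSup (bddAbove_posSet m q) ?_
  refine ⟨Submodule.span ℝ {v}, finrank_span_singleton hv0, ?_⟩
  intro x hx hx0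
  rw [Submodule.mem_span_singleton] at hx
  obtain ⟨c, rfl⟩ := hx
  have hc : c ≠ 0 := by rintro rfl; simp at hx0
  rw [q_smul]
  exact mul_pos (sq_pos_of_ne_zero hc) hv

lemma posInertia_eq {m : ℕ} (q : QuadraticForm ℝ (Fin m → ℝ))
    (E : (Fin m → ℝ) ≃ₗ[ℝ] (Fin m → ℝ)) (w : Fin m → ℝ) (d : ℕ) (hdm : d ≤ m)
    (hq : ∀ v, q (E v) = ∑ i, w i * (v i * v i))
    (hw : ∀ i : Fin m, (i : ℕ) < d ↔ 0 < w i) :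
    posInertia q = d := by
  have hmem : d ∈ {k : ℕ | ∃ W : Submodule ℝ (Fin m → ℝ),
      Module.finrank ℝ W = k ∧ ∀ x ∈ W, x ≠ 0 → 0 < q x} := by
    refine ⟨(LinearMap.range (extZero d m)).map (E : (Fin m → ℝ) →ₗ[ℝ] (Fin m → ℝ)), ?_, ?_⟩
    · rw [LinearEquiv.finrank_map_eq]
      exact finrank_range_extZero hdm
    · intro x hx hx0
      obtain ⟨v, hv, rfl⟩ := Submodule.mem_map.1 hx
      have hv0 : v ≠ 0 := by
        rintro rfl
        simp at hx0
      rw [show (E : (Fin m → ℝ) →ₗ[ℝ] (Fin m → ℝ)) v = E v from rfl, hq]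
      exact sum_pos_of_supported hw hv0 ((mem_range_extZero hdm v).1 hv)
  apply le_antisymm
  · refine csSup_le ⟨d, hmem⟩ ?_
    rintro k ⟨W, hWk, hWpos⟩
    by_contra hkd
    push_neg at hkd
    set U : Submodule ℝ (Fin m → ℝ) :=
      (LinearMap.ker (restr d m hdm)).map (E : (Fin m → ℝ) →ₗ[ℝ] (Fin m → ℝ)) with hU
    have hUrank : Module.finrank ℝ U = m - d := by
      rw [hU, LinearEquiv.finrank_map_eq]
      exact finrank_ker_restr hdm
    have hUnonpos : ∀ x ∈ U, q x ≤ 0 := by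
      intro x hx
      obtain ⟨v, hv, rfl⟩ := Submodule.mem_map.1 hx
      rw [show (E : (Fin m → ℝ) →ₗ[ℝ] (Fin m → ℝ)) v = E v from rfl, hq]
      exact sum_nonpos_of_cosupported hw ((mem_ker_restr hdm v).1 hv)
    have hinf : W ⊓ U = ⊥ := by
      rw [Submodule.eq_bot_iff]
      intro x hx
      by_contra hx0
      exact absurd (hWpos x hx.1 hx0) (not_lt.2 (hUnonpos x hx.2))
    have hsum := Submodule.finrank_sup_add_finrank_inf_eq W U
    rw [hinf] at hsum
    simp only [finrank_bot, add_zero] at hsum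
    have hle : Module.finrank ℝ ↥(W ⊔ U) ≤ m := by
      calc Module.finrank ℝ ↥(W ⊔ U) ≤ Module.finrank ℝ (Fin m → ℝ) := (W ⊔ U).finrank_le
      _ = m := by simp
    omega
  · exact le_csSup (bddAbove_posSet m q) hmem

end PST
end S6
section S7
open Projectivization Topology unitInterval
namespace PST

lemma mk_eq_of_eq {m : ℕ} {v u : Fin m → ℝ} (h : v = u) (hv : v ≠ 0) (hu : u ≠ 0) :
    Projectivization.mk ℝ v hv = Projectivization.mk ℝ u hu := by subst h; rfl

lemma homotopyEquiv_posSet {m d : ℕ} (hdm : d ≤ m) (w : Fin m → ℝ)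
    (hw : ∀ i : Fin m, (i : ℕ) < d ↔ 0 < w i) :
    Nonempty (ContinuousMap.HomotopyEquiv
      {P : Projectivization ℝ (Fin m → ℝ) | 0 < QuadraticMap.weightedSumSquares ℝ w P.rep}
      (Projectivization ℝ (Fin d → ℝ))) := by
  classical
  set qs : QuadraticForm ℝ (Fin m → ℝ) := QuadraticMap.weightedSumSquares ℝ w with hqs
  have happly : ∀ v : Fin m → ℝ, qs v = ∑ i, w i * (v i * v i) := by
    intro v
    rw [hqs, QuadraticMap.weightedSumSquares_apply]
    simp [smul_eq_mul]
  set C : Set (Fin m → ℝ) := {v | 0 < qs v} with hCdef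
  have hCopen : IsOpen C := by
    have hcont : Continuous fun v : Fin m → ℝ => ∑ i, w i * (v i * v i) := by
      apply continuous_finset_sum
      intro i _
      exact continuous_const.mul ((continuous_apply i).mul (continuous_apply i))
    have : C = (fun v : Fin m → ℝ => ∑ i, w i * (v i * v i)) ⁻¹' Set.Ioi 0 := by
      ext v; simp [hCdef, happly v]
    rw [this]
    exact isOpen_Ioi.preimage hcont
  have h0 : ∀ v ∈ C, v ≠ 0 := fun v hv => pos_ne_zero qs hv
  have hinv : ∀ (c : ℝˣ), ∀ v ∈ C, (c : ℝ) • v ∈ C := by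
    intro c v hv
    show 0 < qs ((c : ℝ) • v)
    rw [q_smul]
    exact mul_pos (sq_pos_of_ne_zero (Units.ne_zero c)) hv
  have mkC := isOpenQuotientMap_mkC hCopen h0 hinv
  -- basic maps
  set J : (Fin d → ℝ) →ₗ[ℝ] (Fin m → ℝ) := extZero d m with hJdef
  set r : (Fin m → ℝ) →ₗ[ℝ] (Fin d → ℝ) := restr d m hdm with hrdef
  have hJpos : ∀ u : Fin d → ℝ, u ≠ 0 → 0 < qs (J u) := by
    intro u hu
    rw [happly]
    have hJu : J u ≠ 0 := by
      intro h
      exact hu (extZero_injective hdm (by rw [h, map_zero]))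
    exact sum_pos_of_supported hw hJu (fun i hi => extZero_supported u i hi)
  have hrne : ∀ v : Fin m → ℝ, 0 < qs v → r v ≠ 0 := by
    intro v hv hrv
    have hsupp : ∀ i : Fin m, (i : ℕ) < d → v i = 0 := (mem_ker_restr hdm v).1 hrv
    have := sum_nonpos_of_cosupported hw hsupp
    rw [← happly] at this
    exact absurd hv (not_lt.2 this)
  -- the two maps
  set Sset : Set (Projectivization ℝ (Fin m → ℝ)) := {P | 0 < qs P.rep} with hSdef
  have hmemS : ∀ (v : Fin m → ℝ) (hv : v ≠ 0), 0 < qs v →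
      Projectivization.mk ℝ v hv ∈ Sset := by
    intro v hv hpos
    show 0 < qs (Projectivization.mk ℝ v hv).rep
    exact (rep_pos_iff qs hv).2 hpos
  let fmap : Projectivization ℝ (Fin d → ℝ) → ↥Sset := fun P =>
    ⟨Projectivization.mk ℝ (J P.rep) (pos_ne_zero qs (hJpos _ P.rep_nonzero)),
      hmemS _ _ (hJpos _ P.rep_nonzero)⟩
  let gmap : ↥Sset → Projectivization ℝ (Fin d → ℝ) := fun P =>
    Projectivization.mk ℝ (r P.1.rep) (hrne _ P.2)
  -- computation rules
  have fmap_mk : ∀ (u : Fin d → ℝ) (hu : u ≠ 0),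
      (fmap (Projectivization.mk ℝ u hu)).1 =
        Projectivization.mk ℝ (J u) (pos_ne_zero qs (hJpos u hu)) := by
    intro u hu
    obtain ⟨a, ha⟩ := exists_smul_eq_mk_rep ℝ u hu
    show Projectivization.mk ℝ (J (Projectivization.mk ℝ u hu).rep) _ = _
    have h1 : J ((Projectivization.mk ℝ u hu).rep) = (a : ℝ) • J u := by
      rw [← ha, Units.smul_def, map_smul]
    have h2 := mk_eq_of_eq h1 (pos_ne_zero qs (hJpos _ (rep_nonzero _)))
      (by rw [← h1]; exact pos_ne_zero qs (hJpos _ (rep_nonzero _)))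
    rw [h2]
    exact mk_unit_smul a (J u) (pos_ne_zero qs (hJpos u hu)) _
  have gmap_mk : ∀ (v : Fin m → ℝ) (hv : v ≠ 0) (hvS : Projectivization.mk ℝ v hv ∈ Sset)
      (hrv : r v ≠ 0),
      gmap ⟨Projectivization.mk ℝ v hv, hvS⟩ = Projectivization.mk ℝ (r v) hrv := by
    intro v hv hvS hrv
    obtain ⟨a, ha⟩ := exists_smul_eq_mk_rep ℝ v hv
    show Projectivization.mk ℝ (r (Projectivization.mk ℝ v hv).rep) _ = _
    have h1 : r ((Projectivization.mk ℝ v hv).rep) = (a : ℝ) • r v := by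
      rw [← ha, Units.smul_def, map_smul]
    have h2 := mk_eq_of_eq h1 (hrne _ hvS) (by rw [← h1]; exact hrne _ hvS)
    rw [h2]
    exact mk_unit_smul a (r v) hrv _
  -- continuity of fmap
  have hfmapc : Continuous fmap := by
    rw [(isQuotientMap_mkQ d).continuous_iff]
    have heq : (fmap ∘ fun v : {v : Fin d → ℝ // v ≠ 0} => Projectivization.mk ℝ v.1 v.2)
        = fun v : {v : Fin d → ℝ // v ≠ 0} =>
          (⟨Projectivization.mk ℝ (J v.1) (pos_ne_zero qs (hJpos v.1 v.2)),
            hmemS _ _ (hJpos v.1 v.2)⟩ : ↥Sset) := by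
      funext v
      exact Subtype.ext (fmap_mk v.1 v.2)
    rw [heq]
    refine Continuous.subtype_mk ?_ _
    have hsub : Continuous (fun v : {v : Fin d → ℝ // v ≠ 0} =>
        (⟨J v.1, pos_ne_zero qs (hJpos v.1 v.2)⟩ : {v : Fin m → ℝ // v ≠ 0})) :=
      Continuous.subtype_mk (J.continuous_of_finiteDimensional.comp continuous_subtype_val) _
    exact (continuous_mkQ m).comp hsub
  -- continuity of gmap
  have hgmapc : Continuous gmap := by
    rw [mkC.isQuotientMap.continuous_iff]
    have heq : (gmap ∘ fun v : {v : Fin m → ℝ // v ∈ C} =>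
        (⟨Projectivization.mk ℝ v.1 (h0 v.1 v.2), (rep_mem_iff hinv (h0 v.1 v.2)).2 v.2⟩ :
          {P : Projectivization ℝ (Fin m → ℝ) // P.rep ∈ C}))
        = fun v : {v : Fin m → ℝ // v ∈ C} =>
          Projectivization.mk ℝ (r v.1) (hrne v.1 v.2) := by
      funext v
      exact gmap_mk v.1 (h0 v.1 v.2) ((rep_mem_iff hinv (h0 v.1 v.2)).2 v.2) (hrne v.1 v.2)
    rw [heq]
    have hsub : Continuous (fun v : {v : Fin m → ℝ // v ∈ C} =>
        (⟨r v.1, hrne v.1 v.2⟩ : {u : Fin d → ℝ // u ≠ 0})) :=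
      Continuous.subtype_mk (r.continuous_of_finiteDimensional.comp continuous_subtype_val) _
    exact (continuous_mkQ d).comp hsub
  -- the homotopy data
  let Fv : (Fin m → ℝ) → ℝ → (Fin m → ℝ) := fun v t i => if (i : ℕ) < d then v i else (1 - t) * v i
  have hFpos : ∀ (v : Fin m → ℝ) (t : ℝ), 0 ≤ t → t ≤ 1 → 0 < qs v → 0 < qs (Fv v t) := by
    intro v t ht0 ht1 hv
    rw [happly]
    calc (0:ℝ) < qs v := hv
    _ = ∑ i, w i * (v i * v i) := happly v
    _ ≤ _ := sum_scale_ge hw v ht0 ht1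
  have hFsmul : ∀ (c : ℝ) (v : Fin m → ℝ) (t : ℝ), Fv (c • v) t = c • Fv v t := by
    intro c v t
    funext i
    by_cases hi : (i : ℕ) < d <;> simp [Fv, hi, Pi.smul_apply, smul_eq_mul] <;> ring
  have hF0 : ∀ v : Fin m → ℝ, Fv v 0 = v := by
    intro v; funext i; by_cases hi : (i : ℕ) < d <;> simp [Fv, hi]
  have hF1 : ∀ v : Fin m → ℝ, Fv v 1 = J (r v) := by
    intro v; funext i
    rw [show J (r v) i = extZero d m (restr d m hdm v) i from rfl, extZero_restr]
    by_cases hi : (i : ℕ) < d <;> simp [Fv, hi]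
  -- the homotopy, descended
  have hmemFv : ∀ (P : ↥Sset) (t : unitInterval), 0 < qs (Fv P.1.rep (t : ℝ)) :=
    fun P t => hFpos _ _ t.2.1 t.2.2 P.2
  let Hfun : unitInterval × ↥Sset → ↥Sset := fun p =>
    ⟨Projectivization.mk ℝ (Fv p.2.1.rep (p.1 : ℝ)) (pos_ne_zero qs (hmemFv p.2 p.1)),
      hmemS _ _ (hmemFv p.2 p.1)⟩
  have Hfun_mk : ∀ (t : unitInterval) (v : Fin m → ℝ) (hv : v ≠ 0)
      (hvS : Projectivization.mk ℝ v hv ∈ Sset) (hFne : Fv v (t : ℝ) ≠ 0)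
      (hFS : Projectivization.mk ℝ (Fv v (t : ℝ)) hFne ∈ Sset),
      Hfun (t, ⟨Projectivization.mk ℝ v hv, hvS⟩) =
        ⟨Projectivization.mk ℝ (Fv v (t : ℝ)) hFne, hFS⟩ := by
    intro t v hv hvS hFne hFS
    obtain ⟨a, ha⟩ := exists_smul_eq_mk_rep ℝ v hv
    refine Subtype.ext ?_
    show Projectivization.mk ℝ (Fv (Projectivization.mk ℝ v hv).rep (t : ℝ)) _ = _
    have h1 : Fv ((Projectivization.mk ℝ v hv).rep) (t : ℝ) = (a : ℝ) • Fv v (t : ℝ) := by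
      rw [← ha, Units.smul_def, hFsmul]
    have h2 := mk_eq_of_eq h1 (pos_ne_zero qs (hmemFv ⟨_, hvS⟩ t))
      (by rw [← h1]; exact pos_ne_zero qs (hmemFv ⟨_, hvS⟩ t))
    rw [h2]
    exact mk_unit_smul a _ hFne _
  have hHcont : Continuous Hfun := by
    have hoq := IsOpenQuotientMap.prodMap (IsOpenQuotientMap.id (X := unitInterval)) mkC
    rw [hoq.isQuotientMap.continuous_iff]
    have heq : (Hfun ∘ Prod.map (id : unitInterval → unitInterval)
        (fun v : {v : Fin m → ℝ // v ∈ C} =>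
          (⟨Projectivization.mk ℝ v.1 (h0 v.1 v.2), (rep_mem_iff hinv (h0 v.1 v.2)).2 v.2⟩ :
            {P : Projectivization ℝ (Fin m → ℝ) // P.rep ∈ C})))
        = fun p : unitInterval × {v : Fin m → ℝ // v ∈ C} =>
          (⟨Projectivization.mk ℝ (Fv p.2.1 (p.1 : ℝ))
              (pos_ne_zero qs (hFpos p.2.1 _ p.1.2.1 p.1.2.2 p.2.2)),
            hmemS _ _ (hFpos p.2.1 _ p.1.2.1 p.1.2.2 p.2.2)⟩ : ↥Sset) := by
      funext p
      exact Hfun_mk p.1 p.2.1 (h0 p.2.1 p.2.2) ((rep_mem_iff hinv (h0 p.2.1 p.2.2)).2 p.2.2)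
        (pos_ne_zero qs (hFpos p.2.1 _ p.1.2.1 p.1.2.2 p.2.2))
        (hmemS _ _ (hFpos p.2.1 _ p.1.2.1 p.1.2.2 p.2.2))
    rw [heq]
    refine Continuous.subtype_mk ?_ _
    have hFvc : Continuous (fun p : unitInterval × {v : Fin m → ℝ // v ∈ C} =>
        Fv p.2.1 (p.1 : ℝ)) := by
      apply continuous_pi
      intro i
      by_cases hi : (i : ℕ) < d
      · simp only [Fv, hi, if_true]
        exact (continuous_apply i).comp (continuous_subtype_val.comp continuous_snd)
      · simp only [Fv, hi, if_false]
        exact ((continuous_const.sub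
          (continuous_subtype_val.comp continuous_fst)).mul
          ((continuous_apply i).comp (continuous_subtype_val.comp continuous_snd)))
    have hsub : Continuous (fun p : unitInterval × {v : Fin m → ℝ // v ∈ C} =>
        (⟨Fv p.2.1 (p.1 : ℝ), pos_ne_zero qs (hFpos p.2.1 _ p.1.2.1 p.1.2.2 p.2.2)⟩ :
          {v : Fin m → ℝ // v ≠ 0})) := Continuous.subtype_mk hFvc _
    exact (continuous_mkQ m).comp hsub
  -- endpoints
  have hH0 : ∀ x : ↥Sset, Hfun (0, x) = x := by
    intro x
    refine Subtype.ext ?_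
    show Projectivization.mk ℝ (Fv x.1.rep ((0 : unitInterval) : ℝ)) _ = x.1
    have h1 : Fv x.1.rep ((0 : unitInterval) : ℝ) = x.1.rep := by
      rw [show ((0 : unitInterval) : ℝ) = 0 from rfl, hF0]
    rw [mk_eq_of_eq h1 _ x.1.rep_nonzero]
    exact mk_rep x.1
  have hH1 : ∀ x : ↥Sset, Hfun (1, x) = fmap (gmap x) := by
    intro x
    refine Subtype.ext ?_
    show Projectivization.mk ℝ (Fv x.1.rep ((1 : unitInterval) : ℝ)) _ = (fmap (gmap x)).1
    obtain ⟨a, ha⟩ := exists_smul_eq_mk_rep ℝ (r x.1.rep) (hrne _ x.2)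
    have h1 : Fv x.1.rep ((1 : unitInterval) : ℝ) = J (r x.1.rep) := by
      rw [show ((1 : unitInterval) : ℝ) = 1 from rfl, hF1]
    have hJr : J (r x.1.rep) ≠ 0 := by
      rw [← hF1]
      exact pos_ne_zero qs (hFpos _ _ zero_le_one le_rfl x.2)
    rw [mk_eq_of_eq h1 _ hJr]
    show _ = Projectivization.mk ℝ (J (gmap x).rep) _
    have h2 : J ((gmap x).rep) = (a : ℝ) • J (r x.1.rep) := by
      show J ((Projectivization.mk ℝ (r x.1.rep) (hrne _ x.2)).rep) = _
      rw [← ha, Units.smul_def, map_smul]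
    rw [mk_eq_of_eq h2 (pos_ne_zero qs (hJpos _ (rep_nonzero _)))
      (by rw [← h2]; exact pos_ne_zero qs (hJpos _ (rep_nonzero _)))]
    exact (mk_unit_smul a _ hJr _).symm
  -- g ∘ f = id
  have hgf : ∀ P : Projectivization ℝ (Fin d → ℝ), gmap (fmap P) = P := by
    intro P
    obtain ⟨a, ha⟩ := exists_smul_eq_mk_rep ℝ (J P.rep) (pos_ne_zero qs (hJpos _ P.rep_nonzero))
    show Projectivization.mk ℝ (r (fmap P).1.rep) _ = P
    have h1 : r ((fmap P).1.rep) = (a : ℝ) • P.rep := by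
      show r ((Projectivization.mk ℝ (J P.rep) _).rep) = _
      rw [← ha, Units.smul_def, map_smul]
      congr 1
      exact restr_extZero hdm P.rep
    have hne : (a : ℝ) • P.rep ≠ 0 := by rw [← h1]; exact hrne _ (fmap P).2
    rw [mk_eq_of_eq h1 _ hne, mk_unit_smul a P.rep P.rep_nonzero]
    exact mk_rep P
  -- assemble
  refine ⟨⟨⟨gmap, hgmapc⟩, ⟨fmap, hfmapc⟩, ?_, ?_⟩⟩
  · -- (fmap ∘ gmap) homotopic to id
    refine ⟨(⟨⟨Hfun, hHcont⟩, hH0, hH1⟩ : ContinuousMap.Homotopy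
      (ContinuousMap.id _) ((ContinuousMap.mk fmap hfmapc).comp ⟨gmap, hgmapc⟩)).symm⟩
  · -- gmap ∘ fmap = id
    have : (ContinuousMap.mk gmap hgmapc).comp ⟨fmap, hfmapc⟩ = ContinuousMap.id _ :=
      ContinuousMap.ext hgf
    rw [this]
end PST
end S7
section S8
open Projectivization Topology
namespace PST
variable {m : ℕ}

/-- The self-map of projective space induced by a linear automorphism. -/
noncomputable def projMap (E : (Fin m → ℝ) ≃ₗ[ℝ] (Fin m → ℝ)) :
    Projectivization ℝ (Fin m → ℝ) → Projectivization ℝ (Fin m → ℝ) := fun P =>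
  Projectivization.mk ℝ (E P.rep) (E.map_ne_zero_iff.2 P.rep_nonzero)

lemma projMap_mk (E : (Fin m → ℝ) ≃ₗ[ℝ] (Fin m → ℝ)) (v : Fin m → ℝ) (hv : v ≠ 0) :
    projMap E (Projectivization.mk ℝ v hv) =
      Projectivization.mk ℝ (E v) (E.map_ne_zero_iff.2 hv) := by
  obtain ⟨a, ha⟩ := exists_smul_eq_mk_rep ℝ v hv
  show Projectivization.mk ℝ (E (Projectivization.mk ℝ v hv).rep) _ = _
  have h1 : E ((Projectivization.mk ℝ v hv).rep) = (a : ℝ) • E v := by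
    rw [← ha, Units.smul_def, map_smul]
  rw [mk_eq_of_eq h1 (E.map_ne_zero_iff.2 (rep_nonzero _))
    (by rw [← h1]; exact E.map_ne_zero_iff.2 (rep_nonzero _))]
  exact mk_unit_smul a (E v) (E.map_ne_zero_iff.2 hv) _

lemma projMap_continuous (E : (Fin m → ℝ) ≃ₗ[ℝ] (Fin m → ℝ)) : Continuous (projMap E) := by
  rw [(isQuotientMap_mkQ m).continuous_iff]
  have heq : (projMap E ∘ fun v : {v : Fin m → ℝ // v ≠ 0} => Projectivization.mk ℝ v.1 v.2)
      = fun v : {v : Fin m → ℝ // v ≠ 0} =>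
        Projectivization.mk ℝ (E v.1) (E.map_ne_zero_iff.2 v.2) := by
    funext v
    exact projMap_mk E v.1 v.2
  rw [heq]
  have hsub : Continuous (fun v : {v : Fin m → ℝ // v ≠ 0} =>
      (⟨E v.1, E.map_ne_zero_iff.2 v.2⟩ : {v : Fin m → ℝ // v ≠ 0})) :=
    Continuous.subtype_mk
      (((E : (Fin m → ℝ) →ₗ[ℝ] (Fin m → ℝ)).continuous_of_finiteDimensional).comp
        continuous_subtype_val) _
  exact (continuous_mkQ m).comp hsub

lemma projMap_symm_comp (E : (Fin m → ℝ) ≃ₗ[ℝ] (Fin m → ℝ)) (P : Projectivization ℝ (Fin m → ℝ)) :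
    projMap E.symm (projMap E P) = P := by
  induction P using Projectivization.ind with
  | h v hv =>
    rw [projMap_mk, projMap_mk]
    exact mk_eq_of_eq (E.symm_apply_apply v) _ hv

/-- The homeomorphism of projective space induced by a linear automorphism. -/
noncomputable def projHomeo (E : (Fin m → ℝ) ≃ₗ[ℝ] (Fin m → ℝ)) :
    Projectivization ℝ (Fin m → ℝ) ≃ₜ Projectivization ℝ (Fin m → ℝ) where
  toFun := projMap E
  invFun := projMap E.symm
  left_inv := projMap_symm_comp E
  right_inv := fun P => by
    have := projMap_symm_comp E.symm P
    rwa [LinearEquiv.symm_symm] at this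
  continuous_toFun := projMap_continuous E
  continuous_invFun := projMap_continuous E.symm

end PST
end S8
/-- For a real quadratic form `q` on `ℝ^{n+1}` with `i⁺(q) ≥ 1`, the open set
`{[x] ∈ ℝPⁿ : q(x) > 0}` is homotopy equivalent to `ℝP^{i⁺(q)−1}` (realized as the
projectivization of `ℝ^{i⁺(q)}`); if `i⁺(q) = 0` this set is empty. -/
theorem positivity_set_homotopy_type (n : ℕ) (q : QuadraticForm ℝ (Fin (n + 1) → ℝ)) :
    (1 ≤ posInertia q →
      Nonempty (ContinuousMap.HomotopyEquiv
        {P : Projectivization ℝ (Fin (n + 1) → ℝ) | 0 < q P.rep}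
        (Projectivization ℝ (Fin (posInertia q) → ℝ)))) ∧
    (posInertia q = 0 →
      {P : Projectivization ℝ (Fin (n + 1) → ℝ) | 0 < q P.rep} = ∅) := by
  constructor
  · intro _hd
    obtain ⟨E, w, d, hdm, hq, hw⟩ := PST.exists_diagonalization (n + 1) q
    have hpi : posInertia q = d := PST.posInertia_eq q E w d hdm hq hw
    rw [hpi]
    have hqs : ∀ v : Fin (n + 1) → ℝ, QuadraticMap.weightedSumSquares ℝ w v
        = ∑ i, w i * (v i * v i) := fun v => by
      rw [QuadraticMap.weightedSumSquares_apply]; simp [smul_eq_mul]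
    obtain ⟨he⟩ := PST.homotopyEquiv_posSet hdm w hw
    have himg : (PST.projHomeo E) ''
        {P : Projectivization ℝ (Fin (n + 1) → ℝ) |
          0 < QuadraticMap.weightedSumSquares ℝ w P.rep}
        = {P : Projectivization ℝ (Fin (n + 1) → ℝ) | 0 < q P.rep} := by
      ext P
      constructor
      · rintro ⟨Q, hQ, rfl⟩
        show 0 < q ((PST.projMap E) Q).rep
        have h1 : (PST.projMap E) Q =
            Projectivization.mk ℝ (E Q.rep) (E.map_ne_zero_iff.2 Q.rep_nonzero) := by
          conv_lhs => rw [← Projectivization.mk_rep Q]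
          exact PST.projMap_mk E Q.rep Q.rep_nonzero
        rw [h1, PST.rep_pos_iff q, hq, ← hqs]
        exact hQ
      · intro hP
        refine ⟨Projectivization.mk ℝ (E.symm P.rep) (E.symm.map_ne_zero_iff.2 P.rep_nonzero),
          ?_, ?_⟩
        · show 0 < QuadraticMap.weightedSumSquares ℝ w
            (Projectivization.mk ℝ (E.symm P.rep) _).rep
          rw [PST.rep_pos_iff, hqs, ← hq, E.apply_symm_apply]
          exact hP
        · show PST.projMap E _ = P
          rw [PST.projMap_mk]
          rw [PST.mk_eq_of_eq (E.apply_symm_apply P.rep) _ P.rep_nonzero]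
          exact Projectivization.mk_rep P
    have h2 : ↥{P : Projectivization ℝ (Fin (n + 1) → ℝ) |
          0 < QuadraticMap.weightedSumSquares ℝ w P.rep}
        ≃ₜ ↥{P : Projectivization ℝ (Fin (n + 1) → ℝ) | 0 < q P.rep} :=
      ((PST.projHomeo E).image _).trans (Homeomorph.setCongr himg)
    exact ⟨(h2.symm.toHomotopyEquiv).trans he⟩
  · intro h0
    rw [Set.eq_empty_iff_forall_notMem]
    intro P hP
    have h1 := PST.one_le_posInertia_of_pos q (hP : 0 < q P.rep)
    omega
end

section
/- Let q₀, …, q_k be real quadratic forms on ℝ^{n+1} with common zero locus X in ℝPⁿ, and let B = {(ω, [x]) ∈ S^k × ℝPⁿ : (ωq)(x) > 0} with second-factor projection p₂ : B → ℝPⁿ. Then the image of p₂ is ℝPⁿ ∖ X, the fiber p₂^{-1}([x]) over each [x] in the image is contractible (it is an open hemisphere of S^k), and p₂ : B → ℝPⁿ ∖ X is a homotopy equivalence. -/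
namespace SPHE

lemma sumsq_pos {m : ℕ} {w : Fin m → ℝ} (hw : w ≠ 0) : 0 < ∑ i, w i ^ 2 := by
  rcases Function.ne_iff.mp hw with ⟨i, hi⟩
  exact Finset.sum_pos' (fun j _ => sq_nonneg _)
    ⟨i, Finset.mem_univ i, lt_of_le_of_ne (sq_nonneg _) (Ne.symm (pow_ne_zero 2 hi))⟩

/-- Euclidean normalization of a vector. -/
noncomputable def nmz {m : ℕ} (w : Fin m → ℝ) : Fin m → ℝ :=
  (Real.sqrt (∑ i, w i ^ 2))⁻¹ • w

lemma sqrt_sumsq_pos {m : ℕ} {w : Fin m → ℝ} (hw : w ≠ 0) :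
    0 < Real.sqrt (∑ i, w i ^ 2) := Real.sqrt_pos.mpr (sumsq_pos hw)

lemma nmz_sumsq {m : ℕ} {w : Fin m → ℝ} (hw : w ≠ 0) : ∑ i, nmz w i ^ 2 = 1 := by
  have h2 : Real.sqrt (∑ i, w i ^ 2) ^ 2 = ∑ i, w i ^ 2 :=
    Real.sq_sqrt (sumsq_pos hw).le
  simp only [nmz, Pi.smul_apply, smul_eq_mul, mul_pow, ← Finset.mul_sum]
  rw [inv_pow, h2, inv_mul_cancel₀ (sumsq_pos hw).ne']

lemma nmz_eq_self {m : ℕ} {w : Fin m → ℝ} (hw : ∑ i, w i ^ 2 = 1) : nmz w = w := by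
  simp [nmz, hw]

lemma nmz_smul_pos {m : ℕ} {w : Fin m → ℝ} {c : ℝ} (hc : 0 < c) :
    nmz (c • w) = nmz w := by
  have h : ∑ i, (c • w) i ^ 2 = c ^ 2 * ∑ i, w i ^ 2 := by
    simp [mul_pow, Finset.mul_sum]
  simp only [nmz, h, Real.sqrt_mul (sq_nonneg c), Real.sqrt_sq hc.le]
  rw [mul_inv, smul_smul]
  congr 1
  field_simp

lemma sum_mul_add {m : ℕ} (u v c : Fin m → ℝ) :
    ∑ i, (u + v) i * c i = (∑ i, u i * c i) + ∑ i, v i * c i := by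
  simp [add_mul, Finset.sum_add_distrib]

lemma sum_mul_smul {m : ℕ} (r : ℝ) (u c : Fin m → ℝ) :
    ∑ i, (r • u) i * c i = r * ∑ i, u i * c i := by
  simp [Finset.mul_sum, mul_assoc]

lemma nmz_dot_pos {m : ℕ} {u c : Fin m → ℝ} (hu : u ≠ 0)
    (h : 0 < ∑ i, u i * c i) : 0 < ∑ i, nmz u i * c i := by
  rw [nmz, sum_mul_smul]
  exact mul_pos (inv_pos.mpr (sqrt_sumsq_pos hu)) h

lemma ne_zero_of_dot_pos {m : ℕ} {u c : Fin m → ℝ} (h : 0 < ∑ i, u i * c i) :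
    u ≠ 0 := by
  rintro rfl; simp at h

lemma nmz_self_dot_pos {m : ℕ} {c : Fin m → ℝ} (hc : c ≠ 0) :
    0 < ∑ i, nmz c i * c i := by
  refine nmz_dot_pos hc ?_
  simpa [pow_two] using sumsq_pos hc

lemma convex_pos {a b t : ℝ} (ha : 0 < a) (hb : 0 < b) (ht0 : 0 ≤ t) (ht1 : t ≤ 1) :
    0 < (1 - t) * a + t * b := by
  rcases eq_or_lt_of_le ht1 with rfl | h
  · simpa using hb
  · have h1 : 0 < (1 - t) * a := mul_pos (by linarith) ha
    nlinarith [mul_nonneg ht0 hb.le]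

/-- Values along the straight-line path, after normalization. -/
lemma curve {m : ℕ} {c ωa ωb : Fin m → ℝ} {t : ℝ} (ht0 : 0 ≤ t) (ht1 : t ≤ 1)
    (ha : 0 < ∑ i, ωa i * c i) (hb : 0 < ∑ i, ωb i * c i) :
    (∑ i, nmz ((1 - t) • ωa + t • ωb) i ^ 2 = 1)
      ∧ 0 < ∑ i, nmz ((1 - t) • ωa + t • ωb) i * c i := by
  have hdot : 0 < ∑ i, ((1 - t) • ωa + t • ωb) i * c i := by
    rw [sum_mul_add, sum_mul_smul, sum_mul_smul]
    exact convex_pos ha hb ht0 ht1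
  have hne := ne_zero_of_dot_pos hdot
  exact ⟨nmz_sumsq hne, nmz_dot_pos hne hdot⟩

lemma contOn_nmz {m : ℕ} : ContinuousOn (nmz (m := m)) {w | w ≠ 0} := by
  refine ContinuousOn.smul (f := fun w : Fin m → ℝ => (Real.sqrt (∑ i, w i ^ 2))⁻¹) (g := id) ?_ ?_
  · apply ContinuousOn.inv₀
    · exact (Real.continuous_sqrt.comp
        (continuous_finset_sum _ fun i _ => (continuous_apply i).pow 2)).continuousOn
    · exact fun w hw => (sqrt_sumsq_pos hw).ne'
  · exact continuousOn_id

lemma qf_cont {m : ℕ} (Q : QuadraticForm ℝ (Fin m → ℝ)) :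
    Continuous fun x : Fin m → ℝ => Q x := by
  have h : ∀ x : Fin m → ℝ, Q x =
      ∑ i, x i * ∑ j, x j * (QuadraticMap.associatedHom ℝ Q) (fun l => if j = l then 1 else 0)
        (fun l => if i = l then 1 else 0) := by
    intro x
    rw [← QuadraticMap.associated_eq_self_apply ℝ Q x]
    rw [LinearMap.pi_apply_eq_sum_univ ((QuadraticMap.associatedHom ℝ Q) x) x]
    refine Finset.sum_congr rfl fun i _ => ?_
    rw [smul_eq_mul]
    congr 1
    rw [← LinearMap.flip_apply, LinearMap.pi_apply_eq_sum_univ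
      (LinearMap.flip ((QuadraticMap.associatedHom ℝ Q)) (fun l => if i = l then 1 else 0)) x]
    simp [LinearMap.flip_apply]
  simp_rw [h]
  fun_prop

variable {n k : ℕ} (q : Fin (k + 1) → QuadraticForm ℝ (Fin (n + 1) → ℝ))

/-- The vector of values of the quadratic forms. -/
def Qv (x : Fin (n + 1) → ℝ) : Fin (k + 1) → ℝ := fun i => q i x

lemma Qv_cont : Continuous (Qv q) :=
  continuous_pi fun i => qf_cont (q i)

lemma sum_smul_apply (ω : Fin (k + 1) → ℝ) (x : Fin (n + 1) → ℝ) :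
    (∑ i, ω i • q i) x = ∑ i, ω i * Qv q x i := by
  rw [QuadraticMap.sum_apply]
  exact Finset.sum_congr rfl fun i _ => QuadraticMap.smul_apply _ _ _

lemma Qv_smul (c : ℝ) (x : Fin (n + 1) → ℝ) :
    Qv q (c • x) = (c * c) • Qv q x := by
  funext i
  simp [Qv, QuadraticMap.map_smul]

lemma Qv_rep (x : Fin (n + 1) → ℝ) (hx : x ≠ 0) :
    ∃ c : ℝ, 0 < c ∧ Qv q ((Projectivization.mk ℝ x hx).rep) = c • Qv q x := by
  obtain ⟨a, ha⟩ := Projectivization.exists_smul_eq_mk_rep ℝ x hx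
  refine ⟨(a : ℝ) * (a : ℝ), ?_, ?_⟩
  · have h0 : (a : ℝ) ≠ 0 := a.ne_zero
    rcases h0.lt_or_gt with h | h
    · exact mul_pos_of_neg_of_neg h h
    · exact mul_pos h h
  · rw [← ha, Units.smul_def, Qv_smul]

/-- The quotient map onto projective space. -/
noncomputable def pr : {v : Fin (n + 1) → ℝ // v ≠ 0} → Projectivization ℝ (Fin (n + 1) → ℝ) :=
  fun x => Projectivization.mk ℝ x.val x.2

lemma pr_isQuotientMap : Topology.IsQuotientMap (pr (n := n)) :=
  isQuotientMap_quotient_mk'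

/-- The complement of the common zero locus, described via representatives. -/
def S : Set (Projectivization ℝ (Fin (n + 1) → ℝ)) := {P | ¬ ∀ i, q i P.rep = 0}

lemma Qv_rep_ne_zero {P : Projectivization ℝ (Fin (n + 1) → ℝ)} (hP : P ∈ S q) :
    Qv q P.rep ≠ 0 := by
  intro h
  exact hP fun i => congrFun h i

lemma pr_preimage_S : pr ⁻¹' (S q) = {x | Qv q x.val ≠ 0} := by
  ext x
  obtain ⟨c, hc, hrep⟩ := Qv_rep q x.val x.2
  simp only [Set.mem_preimage, Set.mem_setOf_eq, S, pr]
  constructor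
  · intro h h0
    exact h fun i => by
      have := congrFun hrep i
      simp only [this, h0, Pi.smul_apply, Qv] at *
      simp [this]
  · intro h hall
    apply h
    funext i
    have h2 := congrFun hrep i
    have h3 : q i (Projectivization.mk ℝ x.val x.2).rep = 0 := hall i
    simp only [Qv] at h2 ⊢
    rw [h3] at h2
    have := h2.symm
    simpa [hc.ne', Qv] using this

lemma S_isOpen : IsOpen (S q) := by
  rw [← pr_isQuotientMap.isOpen_preimage, pr_preimage_S]
  have h : {x : {v : Fin (n + 1) → ℝ // v ≠ 0} | Qv q x.val ≠ 0}
      = (fun x : {v : Fin (n + 1) → ℝ // v ≠ 0} => Qv q x.val) ⁻¹' {0}ᶜ := rfl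
  rw [h]
  exact (isOpen_compl_singleton).preimage ((Qv_cont q).comp continuous_subtype_val)

/-- The normalized vector of quadratic form values, as a function on `S`. -/
noncomputable def g (P : S q) : Fin (k + 1) → ℝ := nmz (Qv q P.val.rep)

lemma g_cont : Continuous (g q) := by
  rw [(pr_isQuotientMap.restrictPreimage_isOpen (S_isOpen q)).continuous_iff]
  have heq : (g q) ∘ ((S q).restrictPreimage pr)
      = fun x : pr ⁻¹' (S q) => nmz (Qv q x.val.val) := by
    funext x
    obtain ⟨c, hc, hrep⟩ := Qv_rep q x.val.val x.val.2
    simp only [Function.comp_apply, g, Set.restrictPreimage]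
    change nmz (Qv q (Projectivization.mk ℝ x.val.val x.val.2).rep) = _
    rw [hrep, nmz_smul_pos hc]
  rw [heq]
  refine ContinuousOn.comp_continuous contOn_nmz
    ((Qv_cont q).comp (continuous_subtype_val.comp continuous_subtype_val)) ?_
  intro x
  exact (pr_preimage_S q).subset x.2

lemma g_sumsq (P : S q) : ∑ i, g q P i ^ 2 = 1 :=
  nmz_sumsq (Qv_rep_ne_zero q P.2)

lemma g_dot_pos (P : S q) : 0 < ∑ i, g q P i * Qv q P.val.rep i :=
  nmz_self_dot_pos (Qv_rep_ne_zero q P.2)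

end SPHE

open SPHE in
/-- Let `B = {(ω, [x]) ∈ S^k × ℝPⁿ : (ωq)(x) > 0}` with second projection
`p₂(ω, [x]) = [x]`.  Then: the image of `p₂` is `ℝPⁿ ∖ X`, each fiber of `p₂` over a point
of the image is contractible, and `p₂ : B → ℝPⁿ ∖ X` is a homotopy equivalence. -/
theorem second_projection_homotopy_equivalence (n k : ℕ)
    (q : Fin (k + 1) → QuadraticForm ℝ (Fin (n + 1) → ℝ)) :
    (Set.range (fun b : {b : unitSphere k × Projectivization ℝ (Fin (n + 1) → ℝ) //
          0 < (∑ i, (b.1.val : Fin (k + 1) → ℝ) i • q i) b.2.rep} => b.val.2)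
        = {P : Projectivization ℝ (Fin (n + 1) → ℝ) | ¬ ∀ i, q i P.rep = 0}) ∧
    (∀ P : Projectivization ℝ (Fin (n + 1) → ℝ), ¬ (∀ i, q i P.rep = 0) →
      ContractibleSpace {ω ∈ unitSphere k | 0 < (∑ i, ω i • q i) P.rep}) ∧
    (∃ h : ContinuousMap.HomotopyEquiv
        {b : unitSphere k × Projectivization ℝ (Fin (n + 1) → ℝ) //
          0 < (∑ i, (b.1.val : Fin (k + 1) → ℝ) i • q i) b.2.rep}
        {P : Projectivization ℝ (Fin (n + 1) → ℝ) | ¬ ∀ i, q i P.rep = 0},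
      ∀ b, (h.toFun b).val = b.val.2) := by
  classical
  -- basic facts
  have hBmem : ∀ b : {b : unitSphere k × Projectivization ℝ (Fin (n + 1) → ℝ) //
      0 < (∑ i, (b.1.val : Fin (k + 1) → ℝ) i • q i) b.2.rep}, b.val.2 ∈ S q := by
    rintro ⟨⟨ω, P⟩, hb⟩ hall
    rw [sum_smul_apply] at hb
    have hz : ∑ i, (ω.val : Fin (k + 1) → ℝ) i * Qv q P.rep i = 0 :=
      Finset.sum_eq_zero fun i _ => by simp [Qv, hall i]
    rw [hz] at hb
    exact lt_irrefl 0 hb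
  refine ⟨?_, ?_, ?_⟩
  · -- the image of p₂
    ext P
    simp only [Set.mem_range, Set.mem_setOf_eq]
    constructor
    · rintro ⟨b, rfl⟩
      exact hBmem b
    · intro hP
      refine ⟨⟨(⟨g q ⟨P, hP⟩, g_sumsq q ⟨P, hP⟩⟩, P), ?_⟩, rfl⟩
      rw [sum_smul_apply]
      exact g_dot_pos q ⟨P, hP⟩
  · -- contractibility of fibers
    intro P hP
    have hc : Qv q P.rep ≠ 0 := Qv_rep_ne_zero q hP
    have hω₀pos : 0 < ∑ i, nmz (Qv q P.rep) i * Qv q P.rep i := nmz_self_dot_pos hc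
    have hω₀sph : nmz (Qv q P.rep) ∈ unitSphere k := nmz_sumsq hc
    rw [contractible_iff_id_nullhomotopic]
    have hω₀mem : nmz (Qv q P.rep) ∈ {ω ∈ unitSphere k | 0 < (∑ i, ω i • q i) P.rep} :=
      ⟨hω₀sph, by rw [sum_smul_apply]; exact hω₀pos⟩
    refine ⟨⟨nmz (Qv q P.rep), hω₀mem⟩, ⟨?_⟩⟩
    -- homotopy from the identity to the constant map at ω₀
    have key : ∀ (t : ℝ), 0 ≤ t → t ≤ 1 → ∀ ω : Fin (k + 1) → ℝ,
        0 < ∑ i, ω i * Qv q P.rep i →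
        (∑ i, nmz ((1 - t) • ω + t • nmz (Qv q P.rep)) i ^ 2 = 1)
          ∧ 0 < ∑ i, nmz ((1 - t) • ω + t • nmz (Qv q P.rep)) i * Qv q P.rep i :=
      fun t ht0 ht1 ω hω => curve ht0 ht1 hω hω₀pos
    have hmemdot : ∀ ω : {ω ∈ unitSphere k | 0 < (∑ i, ω i • q i) P.rep},
        0 < ∑ i, (ω : Fin (k + 1) → ℝ) i * Qv q P.rep i := by
      intro ω
      have := ω.2.2
      rwa [sum_smul_apply] at this
    refine ⟨⟨fun p =>
        ⟨nmz ((1 - (p.1 : ℝ)) • (p.2 : Fin (k + 1) → ℝ) + (p.1 : ℝ) • nmz (Qv q P.rep)),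
          (key _ p.1.2.1 p.1.2.2 _ (hmemdot p.2)).1,
          by rw [sum_smul_apply]; exact (key _ p.1.2.1 p.1.2.2 _ (hmemdot p.2)).2⟩,
        ?_⟩, ?_, ?_⟩
    · -- continuity
      refine Continuous.subtype_mk ?_ _
      refine contOn_nmz.comp_continuous ?_ ?_
      · fun_prop
      · intro p
        apply ne_zero_of_dot_pos (c := Qv q P.rep)
        rw [sum_mul_add, sum_mul_smul, sum_mul_smul]
        exact convex_pos (hmemdot p.2) hω₀pos p.1.2.1 p.1.2.2
    · intro ω
      apply Subtype.ext
      show nmz ((1 - ((0 : unitInterval) : ℝ)) • (ω : Fin (k + 1) → ℝ)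
        + ((0 : unitInterval) : ℝ) • nmz (Qv q P.rep)) = (ω : Fin (k + 1) → ℝ)
      rw [Set.Icc.coe_zero]
      simp only [sub_zero, one_smul, zero_smul, add_zero]
      exact nmz_eq_self ω.2.1
    · intro ω
      apply Subtype.ext
      show nmz ((1 - ((1 : unitInterval) : ℝ)) • (ω : Fin (k + 1) → ℝ)
        + ((1 : unitInterval) : ℝ) • nmz (Qv q P.rep)) = nmz (Qv q P.rep)
      rw [Set.Icc.coe_one]
      simp only [sub_self, zero_smul, one_smul, zero_add]
      exact nmz_eq_self hω₀sph
  · -- the homotopy equivalence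
    set B := {b : unitSphere k × Projectivization ℝ (Fin (n + 1) → ℝ) //
          0 < (∑ i, (b.1.val : Fin (k + 1) → ℝ) i • q i) b.2.rep} with hB
    have hbdot : ∀ b : B, 0 < ∑ i, (b.val.1.val : Fin (k + 1) → ℝ) i * Qv q b.val.2.rep i := by
      intro b
      have := b.2
      rwa [sum_smul_apply] at this
    let pmap : C(B, ↥(S q)) :=
      ⟨fun b => ⟨b.val.2, hBmem b⟩,
        (continuous_snd.comp continuous_subtype_val).subtype_mk _⟩
    have hsval : ∀ P : ↥(S q),
        0 < (∑ i, (((⟨g q P, g_sumsq q P⟩ : unitSphere k) : Fin (k + 1) → ℝ)) i • q i)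
          (((⟨g q P, g_sumsq q P⟩ : unitSphere k), P.val) :
            unitSphere k × Projectivization ℝ (Fin (n + 1) → ℝ)).2.rep := by
      intro P
      rw [sum_smul_apply]
      exact g_dot_pos q P
    let smap : C(↥(S q), B) :=
      ⟨fun P => ⟨(⟨g q P, g_sumsq q P⟩, P.val), hsval P⟩,
        ((((g_cont q).subtype_mk _).prodMk continuous_subtype_val)).subtype_mk hsval⟩
    have hgdot : ∀ b : B, 0 < ∑ i, g q (pmap b) i * Qv q b.val.2.rep i := fun b =>
      g_dot_pos q (pmap b)
    have H2 : ContinuousMap.Homotopy (smap.comp pmap) (ContinuousMap.id B) := by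
      refine ⟨⟨fun p =>
          ⟨(⟨nmz ((1 - (p.1 : ℝ)) • g q (pmap p.2)
              + (p.1 : ℝ) • (p.2.val.1.val : Fin (k + 1) → ℝ)),
            (curve p.1.2.1 p.1.2.2 (hgdot p.2) (hbdot p.2)).1⟩, p.2.val.2),
            by rw [sum_smul_apply]; exact (curve p.1.2.1 p.1.2.2 (hgdot p.2) (hbdot p.2)).2⟩,
          ?_⟩, ?_, ?_⟩
      · -- continuity
        refine Continuous.subtype_mk (Continuous.prodMk (Continuous.subtype_mk ?_ _)
          ((continuous_snd.comp continuous_subtype_val).comp continuous_snd)) _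
        refine contOn_nmz.comp_continuous ?_ ?_
        · have h1 : Continuous fun p : unitInterval × B => g q (pmap p.2) :=
            (g_cont q).comp (pmap.continuous.comp continuous_snd)
          have h2 : Continuous fun p : unitInterval × B => (p.2.val.1.val : Fin (k + 1) → ℝ) :=
            continuous_subtype_val.comp ((continuous_fst.comp continuous_subtype_val).comp
              continuous_snd)
          have h3 : Continuous fun p : unitInterval × B => (1 - (p.1 : ℝ)) :=
            continuous_const.sub (continuous_subtype_val.comp continuous_fst)
          have h4 : Continuous fun p : unitInterval × B => ((p.1 : ℝ)) :=
            continuous_subtype_val.comp continuous_fst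
          exact (h3.smul h1).add (h4.smul h2)
        · intro p
          apply ne_zero_of_dot_pos (c := Qv q p.2.val.2.rep)
          rw [sum_mul_add, sum_mul_smul, sum_mul_smul]
          exact convex_pos (hgdot p.2) (hbdot p.2) p.1.2.1 p.1.2.2
      · intro b
        refine Subtype.ext (Prod.ext (Subtype.ext ?_) rfl)
        show nmz ((1 - ((0 : unitInterval) : ℝ)) • g q (pmap b)
          + ((0 : unitInterval) : ℝ) • (b.val.1.val : Fin (k + 1) → ℝ)) = g q (pmap b)
        rw [Set.Icc.coe_zero]
        simp only [sub_zero, one_smul, zero_smul, add_zero]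
        exact nmz_eq_self (g_sumsq q (pmap b))
      · intro b
        refine Subtype.ext (Prod.ext (Subtype.ext ?_) rfl)
        show nmz ((1 - ((1 : unitInterval) : ℝ)) • g q (pmap b)
          + ((1 : unitInterval) : ℝ) • (b.val.1.val : Fin (k + 1) → ℝ))
          = (b.val.1.val : Fin (k + 1) → ℝ)
        rw [Set.Icc.coe_one]
        simp only [sub_self, zero_smul, one_smul, zero_add]
        exact nmz_eq_self b.val.1.2
    have hps : pmap.comp smap = ContinuousMap.id _ := ContinuousMap.ext fun P => Subtype.ext rfl
    refine ⟨⟨pmap, smap, ⟨H2⟩, ?_⟩, fun b => rfl⟩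
    show (pmap.comp smap).Homotopic (ContinuousMap.id _)
    rw [hps]
end

section
/- Let Q be a real symmetric (n+1)×(n+1) matrix and write det(Q − tI) = a₀ + a₁t + ⋯ + a_n tⁿ + (−1)^{n+1} t^{n+1}. Then the number of positive eigenvalues of Q, counted with multiplicity, equals the number of sign changes in the sequence (a₀, a₁, …, a_n, (−1)^{n+1}) after deleting its zero entries. -/
/-- Number of sign changes of a finite sequence of reals: delete the zero entries, then
count the indices where consecutive entries have opposite signs. -/
noncomputable def signChanges (l : List ℝ) : ℕ :=
  let l' := l.filter (fun x => decide (x ≠ 0))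
  (l'.zip l'.tail).countP (fun p => decide (p.1 * p.2 < 0))

/-- The characteristic polynomial in the form `det(Q − tI)`. -/
noncomputable def detSub {n : ℕ} (Q : Matrix (Fin (n + 1)) (Fin (n + 1)) ℝ) :
    Polynomial ℝ :=
  Matrix.det (Q.map Polynomial.C - (Polynomial.X : Polynomial ℝ) • 1)

namespace Descartes

lemma sign_aux {x y : ℝ} (h : 0 < x * y) : x < 0 ↔ y < 0 := by
  constructor <;> intro h1 <;> by_contra h2 <;> push_neg at h2 <;> nlinarith

noncomputable def chg : ℝ → List ℝ → ℕ
  | _, [] => 0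
  | e, a :: t => (if e * a < 0 then 1 else 0) + chg a t

@[simp] lemma chg_nil (e : ℝ) : chg e [] = 0 := rfl
@[simp] lemma chg_cons (e a : ℝ) (t : List ℝ) :
    chg e (a :: t) = (if e * a < 0 then 1 else 0) + chg a t := rfl

noncomputable def chgL : List ℝ → ℕ
  | [] => 0
  | a :: t => chg a t

@[simp] lemma chgL_nil : chgL [] = 0 := rfl
@[simp] lemma chgL_cons (a : ℝ) (t : List ℝ) : chgL (a :: t) = chg a t := rfl

noncomputable def phi (l : List ℝ) : ℕ := chgL (l.filter (fun x => decide (x ≠ 0)))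

noncomputable def psi (e : ℝ) (l : List ℝ) : ℕ := chg e (l.filter (fun x => decide (x ≠ 0)))

lemma countP_zip_eq (l : List ℝ) :
    (l.zip l.tail).countP (fun p => decide (p.1 * p.2 < 0)) = chgL l := by
  match l with
  | [] => rfl
  | [a] => rfl
  | a :: b :: t =>
    have ih := countP_zip_eq (b :: t)
    simp only [List.tail_cons, List.zip_cons_cons, List.countP_cons] at *
    rw [ih, chgL_cons, chgL_cons, chg_cons]
    by_cases h : a * b < 0 <;> simp [h] <;> omega

lemma signChanges_eq_phi (l : List ℝ) : signChanges l = phi l := by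
  simp [signChanges, phi, countP_zip_eq]

lemma chg_congr {e e' : ℝ} (h : 0 < e * e') (l : List ℝ) : chg e l = chg e' l := by
  match l with
  | [] => rfl
  | a :: t =>
    rw [chg_cons, chg_cons]
    rcases eq_or_ne a 0 with ha | ha
    · simp [ha]
    · have hp : 0 < (e * a) * (e' * a) := by
        have h2 : (0:ℝ) < a * a := mul_self_pos.mpr ha
        calc (0:ℝ) < (e * e') * (a * a) := mul_pos h h2
        _ = (e * a) * (e' * a) := by ring
      simp only [sign_aux hp]

lemma chg_le (e e' : ℝ) (l : List ℝ) : chg e l ≤ 1 + chg e' l := by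
  match l with
  | [] => simp
  | a :: t =>
    rw [chg_cons, chg_cons]
    have : (if e * a < 0 then 1 else 0) ≤ 1 := by split <;> omega
    omega

lemma psi_cons (e x : ℝ) (t : List ℝ) :
    psi e (x :: t) = if x = 0 then psi e t else (if e * x < 0 then 1 else 0) + psi x t := by
  by_cases hx : x = 0 <;> simp [psi, hx, List.filter]

lemma phi_cons_ne {x : ℝ} (hx : x ≠ 0) (t : List ℝ) : phi (x :: t) = psi x t := by
  simp [phi, psi, List.filter, hx]

lemma phi_cons_zero (t : List ℝ) : phi ((0 : ℝ) :: t) = phi t := by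
  simp [phi, List.filter]

end Descartes

namespace Descartes

lemma rel_neg {e c s : ℝ} (h1 : e * s < 0) (h2 : 0 < c * s) : e * c < 0 := by
  have key : (e * c) * (s * s) < 0 := by
    calc (e * c) * (s * s) = (e * s) * (c * s) := by ring
    _ < 0 := mul_neg_of_neg_of_pos h1 h2
  by_contra h
  push_neg at h
  nlinarith [mul_self_nonneg s]

lemma rel_pos {e c s : ℝ} (h1 : e * s < 0) (h2 : c * s < 0) : 0 < e * c := by
  have key : 0 < (e * c) * (s * s) := by
    calc (0:ℝ) < (e * s) * (c * s) := mul_pos_of_neg_of_neg h1 h2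
    _ = (e * c) * (s * s) := by ring
  by_contra h
  push_neg at h
  nlinarith [mul_self_nonneg s]

lemma rel_pos' {e c s : ℝ} (h1 : 0 < e * s) (h2 : 0 < c * s) : 0 < e * c := by
  have key : 0 < (e * c) * (s * s) := by
    calc (0:ℝ) < (e * s) * (c * s) := mul_pos h1 h2
    _ = (e * c) * (s * s) := by ring
  by_contra h
  push_neg at h
  nlinarith [mul_self_nonneg s]

lemma rel_neg' {e c s : ℝ} (h1 : 0 < e * s) (h2 : c * s < 0) : e * c < 0 := by
  rw [mul_comm]; exact rel_neg h2 h1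

/-- coefficients of `(X - r) * q`, `p` being the carried previous coefficient. -/
noncomputable def mulAux (r : ℝ) : ℝ → List ℝ → List ℝ
  | p, [] => [p]
  | p, x :: t => (p - r * x) :: mulAux r x t

@[simp] lemma mulAux_nil (r p : ℝ) : mulAux r p [] = [p] := rfl
@[simp] lemma mulAux_cons (r p x : ℝ) (t : List ℝ) :
    mulAux r p (x :: t) = (p - r * x) :: mulAux r x t := rfl

lemma keyK {r : ℝ} (hr : 0 < r) :
    ∀ (t : List ℝ) (p s e : ℝ), e ≠ 0 → s ≠ 0 → (p = 0 ∨ 0 < p * s) →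
      (p :: t).getLast (List.cons_ne_nil _ _) ≠ 0 →
      (e * s < 0 → psi s t + 1 ≤ psi e (mulAux r p t)) ∧
      (0 < e * s → psi s t ≤ psi e (mulAux r p t)) := by
  intro t
  induction t with
  | nil =>
    intro p s e he hs hps hlast
    simp only [List.getLast_singleton] at hlast
    rcases hps with h0 | h0
    · exact absurd h0 hlast
    refine ⟨fun hes => ?_, fun hes => Nat.zero_le _⟩
    have hep : e * p < 0 := rel_neg hes h0
    simp [psi, List.filter, hlast, hep]
  | cons x t' ih =>
    intro p s e he hs hps hlast
    have hxt : (x :: t').getLast (List.cons_ne_nil _ _) ≠ 0 := by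
      rwa [List.getLast_cons (List.cons_ne_nil _ _)] at hlast
    rw [mulAux_cons]
    rcases eq_or_ne x 0 with rfl | hx
    · -- zero coefficient: anchors unchanged
      have ht' : t' ≠ [] := by
        rintro rfl
        simp at hxt
      have hl0 : ((0:ℝ) :: t').getLast (List.cons_ne_nil _ _) ≠ 0 := hxt
      rw [psi_cons, if_pos rfl]
      rcases hps with rfl | hp0
      · have h := ih 0 s e he hs (Or.inl rfl) hl0
        simpa [psi_cons] using h
      · have hpne : p ≠ 0 := by rintro rfl; simp at hp0
        have h2 := (ih 0 s p hpne hs (Or.inl rfl) hl0).2 hp0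
        rw [show p - r * 0 = p by ring, psi_cons, if_neg hpne]
        constructor
        · intro hes
          rw [if_pos (rel_neg hes hp0)]
          omega
        · intro hes
          omega
    · -- nonzero coefficient x : new anchor
      rw [psi_cons, if_neg hx]
      have hxx : (0:ℝ) < x * x := mul_self_pos.mpr hx
      have hlxx := hxt
      rcases lt_or_gt_of_ne (fun h : x * s = 0 => by
          rcases mul_eq_zero.mp h with h | h
          exacts [hx h, hs h]) with hxs | hxs
      · -- sign change in the original sequence
        have hsx : s * x < 0 := by rw [mul_comm]; exact hxs
        rw [if_pos hsx]
        have hcs : 0 < (p - r * x) * s := by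
          have hrx : 0 < -(r * (x * s)) := by
            rw [neg_pos]
            exact mul_neg_of_pos_of_neg hr hxs
          rcases hps with rfl | hp0 <;> nlinarith
        have hcne : p - r * x ≠ 0 := by
          intro h
          rw [h, zero_mul] at hcs
          exact lt_irrefl _ hcs
        have hcx : (p - r * x) * x < 0 := rel_neg' hcs hxs
        have hIH := (ih x x (p - r * x) hcne hx (Or.inr hxx) hlxx).1 hcx
        rw [psi_cons, if_neg hcne]
        constructor
        · intro hes
          have hec : e * (p - r * x) < 0 := rel_neg hes hcs
          rw [if_pos hec]
          omega
        · intro hes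
          omega
      · -- same sign block continues
        have hsx : ¬ s * x < 0 := by
          rw [mul_comm] at hxs
          exact not_lt.mpr hxs.le
        rw [if_neg hsx, zero_add]
        rcases eq_or_ne (p - r * x) 0 with hc | hc
        · rw [hc, psi_cons, if_pos rfl]
          have hIH := ih x x e he hx (Or.inr hxx) hlxx
          constructor
          · intro hes
            exact hIH.1 (rel_neg hes hxs)
          · intro hes
            exact hIH.2 (rel_pos' hes hxs)
        · rw [psi_cons, if_neg hc]
          rcases lt_or_gt_of_ne (fun h : (p - r * x) * x = 0 => by
              rcases mul_eq_zero.mp h with h | h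
              exacts [hc h, hx h]) with hcx | hcx
          · have hIH := (ih x x (p - r * x) hc hx (Or.inr hxx) hlxx).1 hcx
            constructor
            · intro hes; omega
            · intro hes; omega
          · have hIH := (ih x x (p - r * x) hc hx (Or.inr hxx) hlxx).2 hcx
            have hcs : 0 < (p - r * x) * s := rel_pos' hcx (by rw [mul_comm]; exact hxs)
            constructor
            · intro hes
              rw [if_pos (rel_neg hes hcs)]
              omega
            · intro hes
              omega

lemma phi_mulAux {r : ℝ} (hr : 0 < r) :
    ∀ (a : List ℝ) (ha : a ≠ []) (_ : a.getLast ha ≠ 0),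
      phi a + 1 ≤ phi (mulAux r 0 a) := by
  intro a
  induction a with
  | nil => intro ha _; exact absurd rfl ha
  | cons x t ih =>
    intro ha hlast
    rcases eq_or_ne x 0 with rfl | hx
    · have ht : t ≠ [] := by
        rintro rfl
        simp at hlast
      have hlt : t.getLast ht ≠ 0 := by
        rwa [List.getLast_cons ht] at hlast
      rw [mulAux_cons, show (0:ℝ) - r * 0 = 0 by ring, phi_cons_zero, phi_cons_zero]
      exact ih ht hlt
    · rw [mulAux_cons, phi_cons_ne hx]
      have hne : (0:ℝ) - r * x ≠ 0 := by
        intro h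
        apply hx
        have : r * x = 0 := by linarith [h]
        rcases mul_eq_zero.mp this with h' | h'
        · exact absurd h' (ne_of_gt hr)
        · exact h'
      rw [phi_cons_ne hne]
      have hes : (0 - r * x) * x < 0 := by
        have : (0 - r * x) * x = -(r * (x * x)) := by ring
        rw [this, neg_lt, neg_zero]
        exact mul_pos hr (mul_self_pos.mpr hx)
      exact (keyK hr t x x (0 - r * x) hne hx (Or.inr (mul_self_pos.mpr hx)) hlast).1 hes

end Descartes

namespace Descartes

/-- Alternately negate entries; if `b` is true, negate the first entry. -/
noncomputable def alt : Bool → List ℝ → List ℝ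
  | _, [] => []
  | b, x :: t => (if b then -x else x) :: alt (!b) t

@[simp] lemma alt_nil (b : Bool) : alt b [] = [] := rfl
@[simp] lemma alt_cons (b : Bool) (x : ℝ) (t : List ℝ) :
    alt b (x :: t) = (if b then -x else x) :: alt (!b) t := rfl

open Classical in
lemma keyG : ∀ (t : List ℝ) (b : Bool) (e₁ e₂ : ℝ), e₁ ≠ 0 → e₂ ≠ 0 →
    psi e₁ t + psi e₂ (alt b t) ≤ t.length + (if (0 < e₁ * e₂) ↔ b = true then 0 else 1) := by
  intro t
  induction t with
  | nil => intro b e₁ e₂ _ _; simp [psi]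
  | cons x t' ih =>
    intro b e₁ e₂ he₁ he₂
    rw [alt_cons]
    rcases eq_or_ne x 0 with rfl | hx
    · rw [psi_cons, if_pos rfl, psi_cons, if_pos (by simp)]
      have h := ih (!b) e₁ e₂ he₁ he₂
      have : (if (0 < e₁ * e₂) ↔ (!b) = true then (0:ℕ) else 1) ≤ 1 := by
        split <;> omega
      simp only [List.length_cons]
      omega
    · set x' : ℝ := if b then -x else x with hx'
      have hx'ne : x' ≠ 0 := by
        rw [hx']
        split <;> simpa
      rw [psi_cons, if_neg hx, psi_cons, if_neg hx'ne]
      have hxx' : (0 < x * x') ↔ b = false := by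
        cases b with
        | false =>
          simp only [hx', Bool.false_eq_true, if_false]
          simpa using mul_self_pos.mpr hx
        | true =>
          simp only [hx', if_true]
          constructor
          · intro h
            exfalso
            nlinarith [mul_self_pos.mpr hx]
          · intro h
            exact absurd h (by simp)
      have h := ih (!b) x x' hx hx'ne
      have hδ : (if (0 < x * x') ↔ (!b) = true then (0:ℕ) else 1) = 0 := by
        rw [if_pos]
        rw [hxx']
        cases b <;> simp
      rw [hδ] at h
      have hind : (if e₁ * x < 0 then (1:ℕ) else 0) + (if e₂ * x' < 0 then (1:ℕ) else 0)
          ≤ 1 + (if (0 < e₁ * e₂) ↔ b = true then 0 else 1) := by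
        by_cases h1 : e₁ * x < 0 <;> by_cases h2 : e₂ * x' < 0
        · -- both changes
          have hp : 0 < (e₁ * e₂) * (x * x') := by
            calc (0:ℝ) < (e₁ * x) * (e₂ * x') := mul_pos_of_neg_of_neg h1 h2
            _ = (e₁ * e₂) * (x * x') := by ring
          have hnot : ¬ ((0 < e₁ * e₂) ↔ b = true) := by
            intro hiff
            cases b with
            | true =>
              have h4 : 0 < e₁ * e₂ := hiff.mpr rfl
              have h6 : 0 < x * x' := by
                by_contra hn
                push_neg at hn
                nlinarith
              have := hxx'.mp h6
              simp at this
            | false =>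
              have h6 : 0 < x * x' := hxx'.mpr rfl
              have h4 : 0 < e₁ * e₂ := by
                by_contra hn
                push_neg at hn
                nlinarith
              have := hiff.mp h4
              simp at this
          rw [if_neg hnot, if_pos h1, if_pos h2]
        · simp only [if_pos h1, if_neg h2]; split <;> omega
        · simp only [if_neg h1, if_pos h2]; split <;> omega
        · simp only [if_neg h1, if_neg h2]; split <;> omega
      simp only [List.length_cons]
      omega

end Descartes

namespace Descartes
open Polynomial

-- scaling invariance at list level
lemma chg_map_mul {c : ℝ} (hc : c ≠ 0) : ∀ (l : List ℝ) (e : ℝ),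
    chg (c * e) (l.map (fun x => c * x)) = chg e l := by
  intro l
  induction l with
  | nil => intro e; simp
  | cons a t ih =>
    intro e
    rw [List.map_cons, chg_cons, chg_cons, ih]
    congr 1
    have hiff : (c * e) * (c * a) < 0 ↔ e * a < 0 := by
      have h1 : (c * e) * (c * a) = (c * c) * (e * a) := by ring
      rw [h1]
      constructor
      · intro h
        by_contra hn
        push_neg at hn
        nlinarith [mul_self_pos.mpr hc]
      · intro h
        have := mul_self_pos.mpr hc
        nlinarith
    simp only [hiff]

lemma phi_map_mul {c : ℝ} (hc : c ≠ 0) (l : List ℝ) :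
    phi (l.map (fun x => c * x)) = phi l := by
  have hfil : (l.map (fun x => c * x)).filter (fun x => decide (x ≠ 0))
      = (l.filter (fun x => decide (x ≠ 0))).map (fun x => c * x) := by
    rw [List.filter_map]
    congr 1
    apply List.filter_congr
    intro x _
    by_cases hx : x = 0 <;> simp [hx, hc]
  have hchgL : ∀ m : List ℝ, chgL (m.map (fun x => c * x)) = chgL m := by
    intro m
    rcases m with _ | ⟨a, t⟩
    · rfl
    · rw [List.map_cons, chgL_cons, chg_map_mul hc, chgL_cons]
  rw [phi, hfil, hchgL, phi]

lemma mulAux_length (r : ℝ) : ∀ (a : List ℝ) (p : ℝ), (mulAux r p a).length = a.length + 1 := by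
  intro a
  induction a with
  | nil => intro p; rfl
  | cons x t ih => intro p; simp [ih]

lemma mulAux_getElem (r : ℝ) : ∀ (a : List ℝ) (p : ℝ) (k : ℕ) (hk : k < a.length + 1),
    (mulAux r p a)[k]'(by rw [mulAux_length]; omega)
      = (if k = 0 then p else a.getD (k-1) 0) - r * a.getD k 0 := by
  intro a
  induction a with
  | nil =>
    intro p k hk
    have hk0 : k = 0 := by simp at hk; omega
    subst hk0
    simp
  | cons x t ih =>
    intro p k hk
    match k with
    | 0 => simp
    | k + 1 =>
      have hk' : k < t.length + 1 := by simpa using hk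
      have := ih x k hk'
      simp only [mulAux_cons, List.getElem_cons_succ, this]
      match k with
      | 0 => simp
      | k + 1 => simp

lemma alt_length : ∀ (l : List ℝ) (b : Bool), (alt b l).length = l.length := by
  intro l
  induction l with
  | nil => intro b; rfl
  | cons x t ih => intro b; simp [ih]

lemma alt_getElem : ∀ (l : List ℝ) (b : Bool) (k : ℕ) (hk : k < l.length),
    (alt b l)[k]'(by rw [alt_length]; omega)
      = (if b then (-1:ℝ) else 1) * (-1)^k * l[k] := by
  intro l
  induction l with
  | nil => intro b k hk; simp at hk
  | cons x t ih =>
    intro b k hk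
    match k with
    | 0 =>
      cases b <;> simp
    | k + 1 =>
      have hk' : k < t.length := by simpa using hk
      have := ih (!b) k hk'
      simp only [alt_cons, List.getElem_cons_succ, this]
      cases b <;> simp [pow_succ] <;> ring

/-- the list of coefficients of `p`, from constant to leading. -/
noncomputable def clist (p : ℝ[X]) : List ℝ :=
  List.ofFn fun i : Fin (p.natDegree + 1) => p.coeff i

noncomputable def V (p : ℝ[X]) : ℕ := phi (clist p)

lemma clist_length (p : ℝ[X]) : (clist p).length = p.natDegree + 1 := by
  simp [clist]

lemma clist_getElem (p : ℝ[X]) (k : ℕ) (hk : k < p.natDegree + 1) :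
    (clist p)[k]'(by rw [clist_length]; omega) = p.coeff k := by
  unfold clist
  exact List.getElem_ofFn _

lemma clist_getD (p : ℝ[X]) (k : ℕ) : (clist p).getD k 0 = p.coeff k := by
  rcases lt_or_ge k (p.natDegree + 1) with h | h
  · rw [List.getD_eq_getElem _ _ (by rw [clist_length]; omega), clist_getElem p k h]
  · rw [List.getD_eq_default _ _ (by rw [clist_length]; omega)]
    exact (coeff_eq_zero_of_natDegree_lt (by omega)).symm

lemma clist_ne_nil (p : ℝ[X]) : clist p ≠ [] := by
  intro h
  have := clist_length p
  rw [h] at this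
  simp at this

lemma clist_getLast (p : ℝ[X]) : (clist p).getLast (clist_ne_nil p) = p.leadingCoeff := by
  have h := clist_getElem p p.natDegree (by omega)
  rw [List.getLast_eq_getElem]
  have hlen : (clist p).length - 1 = p.natDegree := by rw [clist_length]; rfl
  simp_rw [hlen]
  rw [h]
  rfl

end Descartes

namespace Descartes
open Polynomial

lemma clist_mul_X_sub_C {p : ℝ[X]} (hp : p ≠ 0) (r : ℝ) :
    clist ((X - C r) * p) = mulAux r 0 (clist p) := by
  have hdeg : ((X - C r) * p).natDegree = p.natDegree + 1 := by
    rw [natDegree_mul (X_sub_C_ne_zero r) hp, natDegree_X_sub_C]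
    omega
  apply List.ext_getElem
  · rw [clist_length, mulAux_length, clist_length, hdeg]
  · intro k hk1 hk2
    rw [clist_length, hdeg] at hk1
    rw [clist_getElem _ _ (by omega), mulAux_getElem r (clist p) 0 k (by rw [clist_length]; omega)]
    rw [clist_getD, clist_getD]
    have hco : ((X - C r) * p).coeff k = (if k = 0 then 0 else p.coeff (k-1)) - r * p.coeff k := by
      rw [sub_mul, coeff_sub, coeff_C_mul]
      congr 1
      match k with
      | 0 => simp [mul_coeff_zero]
      | k + 1 => simp [coeff_X_mul]
    rw [hco]

lemma V_mul_X_sub_C {p : ℝ[X]} (hp : p ≠ 0) {r : ℝ} (hr : 0 < r) :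
    V p + 1 ≤ V ((X - C r) * p) := by
  rw [V, V, clist_mul_X_sub_C hp r]
  apply phi_mulAux hr (clist p) (clist_ne_nil p)
  rw [clist_getLast]
  exact leadingCoeff_ne_zero.mpr hp

lemma V_X_mul {p : ℝ[X]} (hp : p ≠ 0) : V (X * p) = V p := by
  have hdeg : (X * p).natDegree = p.natDegree + 1 := by
    rw [natDegree_mul X_ne_zero hp, natDegree_X]
    omega
  have hlist : clist (X * p) = 0 :: clist p := by
    apply List.ext_getElem
    · rw [clist_length, hdeg, List.length_cons, clist_length]
    · intro k hk1 hk2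
      rw [clist_length, hdeg] at hk1
      rw [clist_getElem _ _ (by omega)]
      match k with
      | 0 => simp [mul_coeff_zero]
      | k + 1 =>
        rw [coeff_X_mul, List.getElem_cons_succ, clist_getElem _ _ (by omega)]
  rw [V, hlist, phi_cons_zero, V]

lemma V_X_pow_mul {p : ℝ[X]} (hp : p ≠ 0) (z : ℕ) : V (X ^ z * p) = V p := by
  induction z with
  | zero => simp
  | succ z ih =>
    have h1 : X ^ (z + 1) * p = X * (X ^ z * p) := by ring
    rw [h1, V_X_mul (mul_ne_zero (pow_ne_zero _ X_ne_zero) hp), ih]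

lemma V_C_mul {p : ℝ[X]} {c : ℝ} (hc : c ≠ 0) : V (C c * p) = V p := by
  have hdeg : (C c * p).natDegree = p.natDegree := natDegree_C_mul hc
  have hlist : clist (C c * p) = (clist p).map (fun x => c * x) := by
    apply List.ext_getElem
    · rw [clist_length, hdeg, List.length_map, clist_length]
    · intro k hk1 hk2
      rw [clist_length, hdeg] at hk1
      rw [clist_getElem _ _ (by omega), List.getElem_map, clist_getElem _ _ (by omega),
        coeff_C_mul]
  rw [V, hlist, phi_map_mul hc, V]

lemma coeff_comp_neg_X (p : ℝ[X]) (k : ℕ) :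
    (p.comp (-X)).coeff k = (-1)^k * p.coeff k := by
  induction p using Polynomial.induction_on' with
  | add f g hf hg => rw [add_comp, coeff_add, hf, hg, coeff_add]; ring
  | monomial n a =>
    have h2 : ((-1 : ℝ[X]))^n = C ((-1:ℝ)^n) := by
      rw [map_pow, map_neg, map_one]
    have h1 : (monomial n a).comp (-X) = C ((-1:ℝ)^n * a) * X^n := by
      rw [monomial_comp, neg_pow, map_mul, ← h2]
      ring
    rw [h1, coeff_C_mul, coeff_X_pow, coeff_monomial]
    by_cases h : k = n
    · simp [h]
    · simp [h, Ne.symm h]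

end Descartes

namespace Descartes
open Polynomial

lemma clist_comp_neg_X {p : ℝ[X]} (hp : p ≠ 0) :
    clist (p.comp (-X)) = alt false (clist p) := by
  have hdeg : (p.comp (-X)).natDegree = p.natDegree := by
    rw [natDegree_comp]
    simp
  apply List.ext_getElem
  · rw [clist_length, hdeg, alt_length, clist_length]
  · intro k hk1 hk2
    rw [clist_length, hdeg] at hk1
    rw [clist_getElem _ _ (by omega),
      alt_getElem (clist p) false k (by rw [clist_length]; omega),
      clist_getElem _ _ (by omega), coeff_comp_neg_X]
    simp

lemma V_add_V_comp_le {p : ℝ[X]} (h0 : p.coeff 0 ≠ 0) : V p + V (p.comp (-X)) ≤ p.natDegree := by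
  have hp : p ≠ 0 := fun h => h0 (by simp [h])
  rw [V, V, clist_comp_neg_X hp]
  have hof : clist p = p.coeff 0 :: List.ofFn (fun i : Fin p.natDegree => p.coeff (i + 1)) := by
    rw [clist, List.ofFn_succ]
    rfl
  set t := List.ofFn (fun i : Fin p.natDegree => p.coeff (i + 1)) with ht
  rw [hof, alt_cons, if_neg (by simp), phi_cons_ne h0, phi_cons_ne h0]
  have hG := keyG t true (p.coeff 0) (p.coeff 0) h0 h0
  rw [if_pos (by simp [mul_self_pos.mpr h0])] at hG
  have hlen : t.length = p.natDegree := by simp [ht]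
  simp only [Bool.not_false]
  omega

/-- the product `∏ (X - r)` over a multiset of reals. -/
noncomputable def prodF (S : Multiset ℝ) : ℝ[X] := (S.map fun r => X - C r).prod

lemma prodF_monic (S : Multiset ℝ) : (prodF S).Monic :=
  monic_multiset_prod_of_monic _ _ fun r _ => monic_X_sub_C r

lemma prodF_ne_zero (S : Multiset ℝ) : prodF S ≠ 0 := (prodF_monic S).ne_zero

lemma prodF_natDegree (S : Multiset ℝ) : (prodF S).natDegree = Multiset.card S := by
  rw [prodF, natDegree_multiset_prod_X_sub_C_eq_card]

lemma prodF_zero : prodF 0 = 1 := by simp [prodF]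

lemma prodF_cons (r : ℝ) (S : Multiset ℝ) : prodF (r ::ₘ S) = (X - C r) * prodF S := by
  rw [prodF, Multiset.map_cons, Multiset.prod_cons, prodF]

lemma prodF_add (S T : Multiset ℝ) : prodF (S + T) = prodF S * prodF T := by
  rw [prodF, Multiset.map_add, Multiset.prod_add, prodF, prodF]

lemma prodF_roots (S : Multiset ℝ) : (prodF S).roots = S := roots_multiset_prod_X_sub_C S

lemma prodF_coeff_zero_ne {S : Multiset ℝ} (h : (0:ℝ) ∉ S) : (prodF S).coeff 0 ≠ 0 := by
  rw [coeff_zero_eq_eval_zero, prodF, eval_multiset_prod, Multiset.map_map]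
  apply Multiset.prod_ne_zero
  intro h0
  rw [Multiset.mem_map] at h0
  obtain ⟨r, hr, he⟩ := h0
  simp only [Function.comp_apply, eval_sub, eval_X, eval_C, zero_sub, neg_eq_zero] at he
  exact h (he ▸ hr)

lemma lower_bound : ∀ (T : Multiset ℝ), (∀ r ∈ T, 0 < r) →
    ∀ (q : ℝ[X]), q ≠ 0 → V q + Multiset.card T ≤ V (prodF T * q) := by
  intro T
  induction T using Multiset.induction_on with
  | empty => intro _ q hq; simp [prodF_zero]
  | cons r T ih =>
    intro hT q hq
    have hr : 0 < r := hT r (Multiset.mem_cons_self r T)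
    have hmul : prodF (r ::ₘ T) * q = (X - C r) * (prodF T * q) := by
      rw [prodF_cons]; ring
    have h1 := ih (fun s hs => hT s (Multiset.mem_cons_of_mem hs)) q hq
    have h2 := V_mul_X_sub_C (mul_ne_zero (prodF_ne_zero T) hq) hr
    rw [hmul, Multiset.card_cons]
    omega

end Descartes

namespace Descartes
open Polynomial

lemma prodF_comp_neg_X (S : Multiset ℝ) :
    (prodF S).comp (-X) = C ((-1:ℝ)^(Multiset.card S)) * prodF (S.map (fun r => -r)) := by
  induction S using Multiset.induction_on with
  | empty => simp [prodF_zero]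
  | cons r S ih =>
    rw [prodF_cons, mul_comp, ih, sub_comp, X_comp, C_comp, Multiset.map_cons, prodF_cons,
      Multiset.card_cons]
    rw [show C ((-1:ℝ)^(Multiset.card S + 1)) = C ((-1:ℝ)^(Multiset.card S)) * C (-1:ℝ) by
      rw [← map_mul, ← pow_succ]]
    rw [map_neg, map_neg, map_one]
    ring

theorem V_prodF (S : Multiset ℝ) :
    V (prodF S) = Multiset.card (S.filter (fun x => 0 < x)) := by
  classical
  set pos := S.filter (fun x => 0 < x) with hpos
  set rest := S.filter (fun x => ¬ 0 < x) with hrest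
  have hS : pos + rest = S := Multiset.filter_add_not _ _
  set zer := rest.filter (fun x => x = 0) with hzer
  set neg := rest.filter (fun x => ¬ x = 0) with hneg
  have hrest2 : zer + neg = rest := Multiset.filter_add_not _ _
  have hposmem : ∀ r ∈ pos, 0 < r := fun r hr => (Multiset.mem_filter.mp hr).2
  have hnegmem : ∀ r ∈ neg, r < 0 := by
    intro r hr
    have h1 := Multiset.mem_filter.mp hr
    have h2 := Multiset.mem_filter.mp h1.1
    rcases lt_trichotomy r 0 with h | h | h
    · exact h
    · exact absurd h (by simpa using h1.2)
    · exact absurd h (by simpa using h2.2)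
  have hzer_rep : zer = Multiset.replicate (Multiset.card zer) 0 :=
    Multiset.eq_replicate_card.mpr (fun b hb => (Multiset.mem_filter.mp hb).2)
  set z := Multiset.card zer
  set q : ℝ[X] := prodF (pos + neg) with hq
  have hq0 : q.coeff 0 ≠ 0 := by
    apply prodF_coeff_zero_ne
    intro h0
    rcases Multiset.mem_add.mp h0 with h | h
    · exact lt_irrefl 0 (hposmem 0 h)
    · exact lt_irrefl 0 (hnegmem 0 h)
  have hqne : q ≠ 0 := prodF_ne_zero _
  have hSsplit : S = zer + (pos + neg) := by
    rw [← hS, ← hrest2]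
    exact add_left_comm pos zer neg
  have hprod : prodF S = X ^ z * q := by
    rw [hSsplit, prodF_add, hq]
    congr 1
    rw [hzer_rep, prodF]
    have h5 : Multiset.map (fun r => X - C r) (Multiset.replicate z (0:ℝ))
        = Multiset.replicate z (X : ℝ[X]) := by
      rw [Multiset.map_replicate]
      congr 1
      simp
    rw [h5, Multiset.prod_replicate]
  have hVS : V (prodF S) = V q := by rw [hprod, V_X_pow_mul hqne]
  -- lower bound for positive roots:  card pos ≤ V q
  have hLB1 : Multiset.card pos ≤ V q := by
    have h := lower_bound pos hposmem (prodF neg) (prodF_ne_zero neg)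
    rw [hq, prodF_add]
    omega
  -- lower bound for negative roots:  card neg ≤ V (q.comp (-X))
  have hLB2 : Multiset.card neg ≤ V (q.comp (-X)) := by
    rw [hq, prodF_comp_neg_X, V_C_mul (pow_ne_zero _ (by norm_num : (-1:ℝ) ≠ 0))]
    have hsplit2 : (pos + neg).map (fun r => -r)
        = neg.map (fun r => -r) + pos.map (fun r => -r) := by
      rw [Multiset.map_add]
      exact add_comm _ _
    rw [hsplit2, prodF_add]
    have h := lower_bound (neg.map (fun r => -r))
      (by
        intro s hs
        rw [Multiset.mem_map] at hs
        obtain ⟨r, hr, rfl⟩ := hs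
        linarith [hnegmem r hr])
      (prodF (pos.map (fun r => -r))) (prodF_ne_zero _)
    rw [Multiset.card_map] at h
    omega
  -- upper bound
  have hUB : V q + V (q.comp (-X)) ≤ Multiset.card pos + Multiset.card neg := by
    have h := V_add_V_comp_le hq0
    have hdeg : q.natDegree = Multiset.card pos + Multiset.card neg := by
      rw [hq, prodF_natDegree, Multiset.card_add]
    omega
  rw [hVS]
  omega

end Descartes

namespace Descartes
open Polynomial Matrix

lemma charpoly_conj_eq {m : ℕ} (U D : Matrix (Fin m) (Fin m) ℝ) (hU : U * star U = 1) :
    (U * D * star U).charpoly = D.charpoly := by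
  unfold Matrix.charpoly
  have hcomm : Commute (Matrix.scalar (Fin m) (X : ℝ[X])) ((C : ℝ →+* ℝ[X]).mapMatrix U) :=
    scalar_commute _ (fun r' => Commute.all _ _) _
  have hcm : charmatrix (U * D * star U)
      = (C : ℝ →+* ℝ[X]).mapMatrix U * charmatrix D * (C : ℝ →+* ℝ[X]).mapMatrix (star U) := by
    unfold charmatrix
    rw [mul_sub, sub_mul]
    congr 1
    · symm
      calc (C : ℝ →+* ℝ[X]).mapMatrix U * Matrix.scalar (Fin m) X
            * (C : ℝ →+* ℝ[X]).mapMatrix (star U)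
          = Matrix.scalar (Fin m) X
            * ((C : ℝ →+* ℝ[X]).mapMatrix U * (C : ℝ →+* ℝ[X]).mapMatrix (star U)) := by
            rw [← hcomm.eq, mul_assoc]
      _ = Matrix.scalar (Fin m) X * (C : ℝ →+* ℝ[X]).mapMatrix (U * star U) := by
            rw [← _root_.map_mul]
      _ = Matrix.scalar (Fin m) X := by rw [hU]; simp
    · rw [← _root_.map_mul, ← _root_.map_mul]
  rw [hcm, det_mul, det_mul]
  have h1 : det ((C : ℝ →+* ℝ[X]).mapMatrix U) * det ((C : ℝ →+* ℝ[X]).mapMatrix (star U)) = 1 := by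
    rw [← det_mul, ← _root_.map_mul, hU, _root_.map_one, det_one]
  calc det ((C : ℝ →+* ℝ[X]).mapMatrix U) * det (charmatrix D)
      * det ((C : ℝ →+* ℝ[X]).mapMatrix (star U))
      = det (charmatrix D) * (det ((C : ℝ →+* ℝ[X]).mapMatrix U)
        * det ((C : ℝ →+* ℝ[X]).mapMatrix (star U))) := by ring
    _ = det (charmatrix D) := by rw [h1, mul_one]

lemma charpoly_diagonal {m : ℕ} (d : Fin m → ℝ) :
    (Matrix.diagonal d).charpoly = prodF ((Finset.univ.val : Multiset (Fin m)).map d) := by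
  unfold Matrix.charpoly
  have hcm : charmatrix (Matrix.diagonal d) = Matrix.diagonal (fun i => (X : ℝ[X]) - C (d i)) := by
    apply Matrix.ext
    intro i j
    by_cases h : i = j
    · subst h
      simp
    · rw [charmatrix_apply_ne _ _ _ h, Matrix.diagonal_apply_ne _ h, Matrix.diagonal_apply_ne _ h]
      simp
  rw [hcm, det_diagonal, prodF, Multiset.map_map]
  rfl

end Descartes

namespace Descartes
open Polynomial Matrix

lemma clist_eq_ofFn (p : ℝ[X]) (m : ℕ) (h : p.natDegree + 1 = m) :
    clist p = List.ofFn (fun i : Fin m => p.coeff i) := by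
  subst h
  rfl

end Descartes

open Polynomial Descartes in
/-- Descartes' rule for symmetric matrices. -/
theorem descartes_rule_symmetric (n : ℕ) (Q : Matrix (Fin (n + 1)) (Fin (n + 1)) ℝ)
    (hQ : Q.IsSymm) :
    (Q.charpoly.roots.filter fun x => 0 < x).card
      = signChanges (List.ofFn fun i : Fin (n + 2) => (detSub Q).coeff i) := by
  have hH : Q.IsHermitian := by
    rw [Matrix.IsHermitian, Matrix.conjTranspose_eq_transpose_of_trivial]
    exact hQ
  set U : Matrix (Fin (n+1)) (Fin (n+1)) ℝ := (Matrix.IsHermitian.eigenvectorUnitary hH :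
    Matrix (Fin (n+1)) (Fin (n+1)) ℝ) with hUdef
  have hU : U * star U = 1 :=
    (Matrix.mem_unitaryGroup_iff).mp (Matrix.IsHermitian.eigenvectorUnitary hH).2
  have hof : (RCLike.ofReal ∘ hH.eigenvalues : Fin (n+1) → ℝ) = hH.eigenvalues := by
    funext i
    simp
  have hcp : Q.charpoly
      = prodF ((Finset.univ.val : Multiset (Fin (n+1))).map hH.eigenvalues) := by
    conv_lhs => rw [hH.spectral_theorem]
    rw [Unitary.conjStarAlgAut_apply, hof, charpoly_conj_eq _ _ hU, charpoly_diagonal]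
  have hdeg : Q.charpoly.natDegree = n + 1 := by
    rw [Matrix.charpoly_natDegree_eq_dim, Fintype.card_fin]
  have hds : detSub Q = C ((-1:ℝ)^(n+1)) * Q.charpoly := by
    unfold detSub Matrix.charpoly
    have h : Q.map C - (X : ℝ[X]) • 1 = - Matrix.charmatrix Q := by
      unfold Matrix.charmatrix
      rw [neg_sub]
      congr 1
      rw [Matrix.smul_one_eq_diagonal, ← Matrix.scalar_apply]
    rw [h, Matrix.det_neg, Fintype.card_fin, map_pow, map_neg, map_one]
  -- left side
  rw [hcp, prodF_roots]
  -- right side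
  rw [signChanges_eq_phi]
  have hcne : ((-1:ℝ)^(n+1)) ≠ 0 := pow_ne_zero _ (by norm_num)
  have hlist : (List.ofFn fun i : Fin (n + 2) => (detSub Q).coeff i)
      = (List.ofFn fun i : Fin (n + 2) => Q.charpoly.coeff i).map
          (fun x => ((-1:ℝ)^(n+1)) * x) := by
    rw [List.map_ofFn]
    congr 1
    funext i
    simp only [Function.comp_apply]
    rw [hds, coeff_C_mul]
  rw [hlist, phi_map_mul hcne, ← clist_eq_ofFn Q.charpoly (n+2) (by omega), ← V]
  rw [hcp, V_prodF]
end
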